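/- arXiv:1407.2774 — 5 statements merged into one kernel-verified Lean document; each statement's English description precedes it below -/
import Mathlib

section
/- For every k ≥ 2 and every planting distribution Q : {−1,1}^k → [0,1] whose distribution complexity r = r(Q) satisfies r ≥ 2, there exists a constant C > 0 such that for every ε > 0 there exists N with the following property. For every n ≥ N and every integer m ≥ C·n^{r/2}·log n, there exists an estimator f mapping m-tuples of k-clauses over n variables to assignments in {−1,1}^n, such that for every assignment σ ∈ {−1,1}^n, when C₁, …, C_m are drawn independently and identically from the distribution Q_σ on k-clauses, the probability that f(C₁,…,C_m) = σ or f(C₁,…,C_m) = −σ is at least 1 − ε. -/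
/-- The real sign `±1` encoded by a boolean (`true ↦ 1`, `false ↦ -1`). -/
def sgn (b : Bool) : ℝ := if b then 1 else -1

/-- The Fourier coefficient `Q̂(S) = 2⁻ᵏ ∑_{x ∈ {±1}ᵏ} Q(x) ∏_{i ∈ S} xᵢ`. -/
noncomputable def cubeFourierCoeff {k : ℕ} (Q : (Fin k → Bool) → ℝ)
    (S : Finset (Fin k)) : ℝ :=
  ((2 : ℝ) ^ k)⁻¹ * ∑ x : Fin k → Bool, Q x * ∏ i ∈ S, sgn (x i)

/-- A `k`-clause over `n` boolean variables: an ordered `k`-tuple of literals (a literal is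
a pair (variable, sign), the sign `true` standing for `+1` and `false` for `-1`) whose
variables are pairwise distinct. -/
def Clause (k n : ℕ) : Type :=
  {c : Fin k → Fin n × Bool // Function.Injective fun i => (c i).1}

instance (k n : ℕ) : DecidablePred
    (fun c : Fin k → Fin n × Bool => Function.Injective fun i => (c i).1) :=
  fun _ => Fintype.decidableInjectiveFintype _

instance (k n : ℕ) : Fintype (Clause k n) := Subtype.fintype _

instance (k n : ℕ) : DecidableEq (Clause k n) := Subtype.instDecidableEq

/-- The evaluation vector `σ(C) ∈ {±1}ᵏ` of a clause under the assignment `σ`: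
coordinate `i` is `+1` (i.e. `true`) iff the `i`-th literal is true under `σ`. -/
def clauseEval {k n : ℕ} (σ : Fin n → Bool) (C : Clause k n) : Fin k → Bool :=
  fun i => (C.1 i).2 == σ (C.1 i).1

/-- The probability `Q_σ(C) = Q(σ(C)) / ∑_{C'} Q(σ(C'))` of the clause `C` under the
planted distribution with planting distribution `Q` and planted assignment `σ`. -/
noncomputable def plantedProb {k n : ℕ} (Q : (Fin k → Bool) → ℝ)
    (σ : Fin n → Bool) (C : Clause k n) : ℝ :=
  Q (clauseEval σ C) / ∑ C' : Clause k n, Q (clauseEval σ C')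

-- ### basic bool facts
lemma bbb (a b : Bool) : ((a == b) == b) = a := by revert a b; decide

lemma bassoc (a b c : Bool) : ((a == b) == c) = (a == (b == c)) := by revert a b c; decide

lemma sgn_beq (a b : Bool) : sgn (a == b) = sgn a * sgn b := by
  cases a <;> cases b <;> simp [sgn] <;> norm_num

-- ### clause equivalence
def mkClause {k n : ℕ} (σ : Fin n → Bool) (v : Fin k ↪ Fin n) (b : Fin k → Bool) :
    Clause k n :=
  ⟨fun i => (v i, b i == σ (v i)), fun i j h => v.injective (by simpa using h)⟩

lemma eval_mkClause_self {k n : ℕ} (σ : Fin n → Bool) (v : Fin k ↪ Fin n)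
    (b : Fin k → Bool) : clauseEval σ (mkClause σ v b) = b := by
  funext i; simp [clauseEval, mkClause, bbb]

lemma eval_mkClause_other {k n : ℕ} (σ σ' : Fin n → Bool) (v : Fin k ↪ Fin n)
    (b : Fin k → Bool) :
    clauseEval σ' (mkClause σ v b) = fun i => b i == (σ (v i) == σ' (v i)) := by
  funext i; simp only [clauseEval, mkClause, bassoc]

noncomputable def clauseEquiv {k n : ℕ} (σ : Fin n → Bool) :
    Clause k n ≃ (Fin k ↪ Fin n) × (Fin k → Bool) where
  toFun C := (⟨fun i => (C.1 i).1, C.2⟩, clauseEval σ C)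
  invFun p := mkClause σ p.1 p.2
  left_inv C := by
    apply Subtype.ext; funext i
    simp only [mkClause, clauseEval]
    exact Prod.ext rfl (bbb _ _)
  right_inv p := by
    refine Prod.ext (Function.Embedding.ext fun i => rfl) ?_
    exact eval_mkClause_self σ p.1 p.2

lemma clause_sum {k n : ℕ} (σ : Fin n → Bool) (F : Clause k n → ℝ) :
    ∑ C : Clause k n, F C
      = ∑ v : Fin k ↪ Fin n, ∑ b : Fin k → Bool, F (mkClause σ v b) := by
  rw [← ((clauseEquiv σ).symm.sum_comp F), Fintype.sum_prod_type]
  rfl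

lemma normalizer_eq {k n : ℕ} (Q : (Fin k → Bool) → ℝ) (hQ1 : ∑ z, Q z = 1)
    (σ : Fin n → Bool) :
    ∑ C : Clause k n, Q (clauseEval σ C) = (n.descFactorial k : ℝ) := by
  rw [clause_sum σ]
  simp only [eval_mkClause_self, hQ1]
  simp [Finset.sum_const, Fintype.card_embedding_eq]

lemma plantedProb_eq {k n : ℕ} (Q : (Fin k → Bool) → ℝ) (hQ1 : ∑ z, Q z = 1)
    (σ : Fin n → Bool) (C : Clause k n) :
    plantedProb Q σ C = Q (clauseEval σ C) / (n.descFactorial k : ℝ) := by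
  rw [plantedProb, normalizer_eq Q hQ1]

-- ### sqrt of a product
lemma sqrt_prod {ι : Type*} (s : Finset ι) (f : ι → ℝ) (hf : ∀ i, 0 ≤ f i) :
    Real.sqrt (∏ i ∈ s, f i) = ∏ i ∈ s, Real.sqrt (f i) := by
  classical
  induction s using Finset.cons_induction with
  | empty => simp
  | cons a s ha ih =>
      rw [Finset.prod_cons, Finset.prod_cons, Real.sqrt_mul (hf a), ih]

-- ### descFactorial lower bound
lemma desc_ge (t : ℕ) : ∀ a : ℕ, t ≤ a → ((a : ℝ) - t) ^ t ≤ (a.descFactorial t : ℝ) := by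
  induction t with
  | zero => intro a _; simp
  | succ t ih =>
      intro a ha
      have ht : t ≤ a := le_of_lt (Nat.lt_of_lt_of_le (Nat.lt_succ_self t) ha)
      have h1 : ((a : ℝ) - t) ^ t ≤ (a.descFactorial t : ℝ) := ih a ht
      have hnn : (0:ℝ) ≤ (a : ℝ) - (t+1) := by
        have : ((t:ℝ) + 1) ≤ a := by exact_mod_cast ha
        linarith
      have h2 : ((a : ℝ) - (t+1)) ^ t ≤ ((a : ℝ) - t) ^ t := by
        apply pow_le_pow_left₀ hnn; linarith
      have h3 : ((a:ℝ) - (t+1)) ^ (t+1) = ((a:ℝ) - (t+1)) ^ t * ((a:ℝ) - (t+1)) := by ring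
      rw [Nat.descFactorial_succ]
      have h4 : ((a - t : ℕ) : ℝ) = (a:ℝ) - t := by
        rw [Nat.cast_sub ht]
      push_cast [h4]
      have h5 : (0:ℝ) ≤ (a:ℝ) - t := by linarith
      have h6 : ((a:ℝ) - (t+1)) ^ t ≤ (a.descFactorial t : ℝ) := le_trans h2 h1
      have h7 : (0:ℝ) ≤ ((a:ℝ) - (t+1)) ^ t := by positivity
      nlinarith [mul_le_mul h6 (show (a:ℝ) - (t+1) ≤ (a:ℝ) - t by linarith) hnn (le_trans h7 h6)]
          

-- flip involution
def flipEquiv {k : ℕ} (T : Fin k → Bool) : (Fin k → Bool) ≃ (Fin k → Bool) where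
  toFun x := fun i => x i == T i
  invFun x := fun i => x i == T i
  left_inv x := by funext i; exact bbb _ _
  right_inv x := by funext i; exact bbb _ _

/-- If some Fourier coefficient `Q̂(S₀)` is nonzero and `T` has an odd number of `false`s
inside `S₀`, then `Q` is not invariant under the flip given by `T`. -/
lemma fourier_flip {k : ℕ} (Q : (Fin k → Bool) → ℝ) (S₀ : Finset (Fin k))
    (hS₀ : cubeFourierCoeff Q S₀ ≠ 0) (T : Fin k → Bool)
    (hodd : Odd (S₀.filter (fun i => T i = false)).card) :
    ∃ x, Q (fun i => x i == T i) ≠ Q x := by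
  by_contra h
  push_neg at h
  apply hS₀
  have key : ∑ x : Fin k → Bool, Q x * ∏ i ∈ S₀, sgn (x i)
      = (∏ i ∈ S₀, sgn (T i)) * ∑ x : Fin k → Bool, Q x * ∏ i ∈ S₀, sgn (x i) := by
    conv_lhs => rw [← Equiv.sum_comp (flipEquiv T)
      (fun x => Q x * ∏ i ∈ S₀, sgn (x i))]
    rw [Finset.mul_sum]
    apply Finset.sum_congr rfl
    intro x _
    have h1 : Q (flipEquiv T x) = Q x := h x
    simp only [flipEquiv, Equiv.coe_fn_mk] at h1 ⊢
    rw [h1]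
    have h2 : ∏ i ∈ S₀, sgn (x i == T i) = (∏ i ∈ S₀, sgn (T i)) * ∏ i ∈ S₀, sgn (x i) := by
      rw [← Finset.prod_mul_distrib]
      apply Finset.prod_congr rfl
      intro i _
      rw [sgn_beq, mul_comm]
    rw [h2]; ring
  have hT : (∏ i ∈ S₀, sgn (T i)) = -1 := by
    rw [← Finset.prod_filter_mul_prod_filter_not S₀ (fun i => T i = false)]
    have h1 : ∏ i ∈ S₀.filter (fun i => T i = false), sgn (T i)
        = (-1 : ℝ) ^ (S₀.filter (fun i => T i = false)).card := by
      rw [← Finset.prod_const]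
      apply Finset.prod_congr rfl
      intro i hi
      simp only [Finset.mem_filter] at hi
      simp [sgn, hi.2]
    have h2 : ∏ i ∈ S₀.filter (fun i => ¬ T i = false), sgn (T i) = 1 := by
      apply Finset.prod_eq_one
      intro i hi
      simp only [Finset.mem_filter, Bool.not_eq_false] at hi
      simp [sgn, hi.2]
    rw [h1, h2, hodd.neg_one_pow, mul_one]
  rw [hT] at key
  have : ∑ x : Fin k → Bool, Q x * ∏ i ∈ S₀, sgn (x i) = 0 := by linarith
  rw [cubeFourierCoeff, this, mul_zero]

/-- Counting via an explicit injection: patterns `P` force positions into `D` or `Dᶜ`. -/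
lemma inject_count {k n : ℕ} (P : Fin k → Prop) [DecidablePred P] (D : Finset (Fin n))
    (G : (Fin k ↪ Fin n) → ℝ) (hG0 : ∀ v, 0 ≤ G v) (δ : ℝ)
    (hGood : ∀ v : Fin k ↪ Fin n, (∀ i, (v i ∈ D ↔ P i)) → δ ≤ G v) :
    δ * (D.card.descFactorial (Fintype.card {i // P i})
        * (Dᶜ.card.descFactorial (Fintype.card {i // ¬ P i}))) ≤
      ∑ v : Fin k ↪ Fin n, G v := by
  classical
  set X := ({i // P i} ↪ {u // u ∈ D}) × ({i // ¬ P i} ↪ {u // u ∈ Dᶜ}) with hX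
  have hfun : ∀ (x : X) (i : Fin k), Fin n := fun x i =>
    if h : P i then (x.1 ⟨i, h⟩ : Fin n) else (x.2 ⟨i, h⟩ : Fin n)
  set Φfun : X → Fin k → Fin n := fun x i =>
    if h : P i then (x.1 ⟨i, h⟩ : Fin n) else (x.2 ⟨i, h⟩ : Fin n) with hΦfun
  have hmem : ∀ (x : X) (i : Fin k), Φfun x i ∈ D ↔ P i := by
    intro x i
    by_cases h : P i
    · simp only [Φfun, dif_pos h]
      exact ⟨fun _ => h, fun _ => (x.1 ⟨i, h⟩).2⟩
    · simp only [Φfun, dif_neg h]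
      constructor
      · intro hmem'
        have h2 := (x.2 ⟨i, h⟩).2
        rw [Finset.mem_compl] at h2
        exact absurd hmem' h2
      · intro hp; exact absurd hp h
  have hinj : ∀ x : X, Function.Injective (Φfun x) := by
    intro x i j hij
    by_cases hi : P i <;> by_cases hj : P j
    · simp only [Φfun, dif_pos hi, dif_pos hj] at hij
      have := x.1.injective (Subtype.ext hij)
      exact congrArg Subtype.val this
    · exfalso
      have h1 : Φfun x i ∈ D := (hmem x i).2 hi
      rw [hij] at h1
      exact hj ((hmem x j).1 h1)
    · exfalso
      have h1 : Φfun x j ∈ D := (hmem x j).2 hj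
      rw [← hij] at h1
      exact hi ((hmem x i).1 h1)
    · simp only [Φfun, dif_neg hi, dif_neg hj] at hij
      have := x.2.injective (Subtype.ext hij)
      exact congrArg Subtype.val this
  set Φ : X → (Fin k ↪ Fin n) := fun x => ⟨Φfun x, hinj x⟩ with hΦ
  have hΦinj : Function.Injective Φ := by
    intro x y hxy
    have hfe : ∀ i, Φfun x i = Φfun y i := fun i =>
      congrFun (congrArg (fun (e : Fin k ↪ Fin n) => (e : Fin k → Fin n)) hxy) i
    have e1 : x.1 = y.1 := by
      apply Function.Embedding.ext
      rintro ⟨i, h⟩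
      apply Subtype.ext
      have := hfe i
      simpa only [Φfun, dif_pos h] using this
    have e2 : x.2 = y.2 := by
      apply Function.Embedding.ext
      rintro ⟨i, h⟩
      apply Subtype.ext
      have := hfe i
      simpa only [Φfun, dif_neg h] using this
    exact Prod.ext e1 e2
  have hcard : (Fintype.card X : ℝ)
      = (D.card.descFactorial (Fintype.card {i // P i})
        * (Dᶜ.card.descFactorial (Fintype.card {i // ¬ P i}))) := by
    have : Fintype.card X = Fintype.card ({ i // P i } ↪ { u // u ∈ D })
        * Fintype.card ({ i // ¬P i } ↪ { u // u ∈ Dᶜ }) := Fintype.card_prod _ _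
    rw [this, Fintype.card_embedding_eq, Fintype.card_embedding_eq]
    simp only [Fintype.card_coe]
    push_cast
    ring
  calc δ * (D.card.descFactorial (Fintype.card {i // P i})
        * (Dᶜ.card.descFactorial (Fintype.card {i // ¬ P i})))
      = ∑ _x : X, δ := by rw [Finset.sum_const, Finset.card_univ, nsmul_eq_mul, ← hcard, mul_comm]
    _ ≤ ∑ x : X, G (Φ x) := Finset.sum_le_sum (fun x _ => hGood (Φ x) (hmem x))
    _ = ∑ v ∈ Finset.univ.image Φ, G v := (Finset.sum_image (fun x _ y _ h => hΦinj h)).symm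
    _ ≤ ∑ v : Fin k ↪ Fin n, G v := by
        apply Finset.sum_le_sum_of_subset_of_nonneg (Finset.subset_univ _)
        intro v _ _; exact hG0 v

lemma count_lemma {k n : ℕ} (hk : 1 ≤ k) (S₀ : Finset (Fin k)) (hS₀ne : S₀.Nonempty)
    (hn : 4*k ≤ n) (D : Finset (Fin n)) (hd1 : 1 ≤ D.card) (hd2 : D.card ≤ n - 1)
    (G : (Fin k ↪ Fin n) → ℝ) (hG0 : ∀ v, 0 ≤ G v) (δ : ℝ) (hδ : 0 ≤ δ)
    (hGood : ∀ v : Fin k ↪ Fin n, Odd (S₀.filter (fun i => v i ∈ D)).card → δ ≤ G v) :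
    δ * (((n:ℝ)/4)^(k-1) * min (D.card : ℝ) ((n:ℝ) - D.card) / 2) ≤
      ∑ v : Fin k ↪ Fin n, G v := by
  classical
  obtain ⟨i₀, hi₀⟩ := hS₀ne
  set d : ℕ := D.card with hd
  have hdn : d ≤ n := le_trans hd2 (Nat.sub_le n 1)
  have hDc : (Dᶜ.card : ℝ) = (n:ℝ) - d := by
    rw [Finset.card_compl, Fintype.card_fin, Nat.cast_sub hdn]
  have hDcn : Dᶜ.card = n - d := by rw [Finset.card_compl, Fintype.card_fin]
  have hkr : ((k:ℝ) - 1) = ((k-1 : ℕ) : ℝ) := by rw [Nat.cast_sub hk]; push_cast; ring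
  have hn4 : (4:ℝ)*k ≤ n := by exact_mod_cast hn
  have hnn : (0:ℝ) ≤ (n:ℝ)/4 := by positivity
  by_cases hcase : 2*d ≤ n
  · -- min = d ; pattern P i := (i = i₀)
    have hGood' : ∀ v : Fin k ↪ Fin n, (∀ i, (v i ∈ D ↔ i = i₀)) → δ ≤ G v := by
      intro v hv
      apply hGood
      have : S₀.filter (fun i => v i ∈ D) = S₀.filter (fun i => i = i₀) :=
        Finset.filter_congr (fun i _ => by rw [hv i])
      rw [this, Finset.filter_eq', if_pos hi₀, Finset.card_singleton]
      exact odd_one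
    have key := inject_count (fun i => i = i₀) D G hG0 δ hGood'
    rw [Fintype.card_subtype_eq, Fintype.card_subtype_compl, Fintype.card_subtype_eq,
      Fintype.card_fin, Nat.descFactorial_one] at key
    refine le_trans ?_ key
    -- numeric
    have hdr : 2*(d:ℝ) ≤ n := by exact_mod_cast hcase
    have hmin : min (d : ℝ) ((n:ℝ) - d) = (d:ℝ) := min_eq_left (by linarith)
    have ht : k - 1 ≤ Dᶜ.card := by omega
    have hdf : ((n:ℝ)/4)^(k-1) ≤ ((Dᶜ.card).descFactorial (k-1) : ℝ) := by
      refine le_trans ?_ (desc_ge (k-1) Dᶜ.card ht)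
      apply pow_le_pow_left₀ hnn
      rw [hDc, ← hkr]
      have hk1 : (1:ℝ) ≤ k := by exact_mod_cast hk
      linarith
    rw [hmin]
    have h0 : (0:ℝ) ≤ ((n:ℝ)/4)^(k-1) := by positivity
    have h1 : ((n:ℝ)/4)^(k-1) * (d:ℝ) / 2 ≤ ((Dᶜ.card).descFactorial (k-1) : ℝ) * d := by
      have : ((n:ℝ)/4)^(k-1) * (d:ℝ) ≤ ((Dᶜ.card).descFactorial (k-1) : ℝ) * d :=
        mul_le_mul_of_nonneg_right hdf (by positivity)
      nlinarith [mul_nonneg h0 (show (0:ℝ) ≤ (d:ℝ) by positivity)]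
    calc δ * (((n:ℝ)/4)^(k-1) * (d:ℝ) / 2)
        ≤ δ * (((Dᶜ.card).descFactorial (k-1) : ℝ) * d) :=
          mul_le_mul_of_nonneg_left h1 hδ
      _ = δ * ((d:ℝ) * ((Dᶜ.card).descFactorial (k-1) : ℝ)) := by ring
  · -- 2d > n : min = n - d
    have hdr : (n:ℝ) < 2*(d:ℝ) := by exact_mod_cast Nat.lt_of_not_le hcase
    have hmin : min (d : ℝ) ((n:ℝ) - d) = (n:ℝ) - d := min_eq_right (by linarith)
    have hd2r : (d:ℝ) ≤ (n:ℝ) - 1 := by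
      have : d ≤ n - 1 := hd2
      have h1n : 1 ≤ n := by omega
      have := (Nat.cast_le (α := ℝ)).2 hd2
      rw [Nat.cast_sub h1n] at this
      simpa using this
    rcases Nat.even_or_odd S₀.card with he | ho
    · -- S₀.card even : P i := ¬ (i = i₀), overlap S₀.card - 1 odd
      have hGood' : ∀ v : Fin k ↪ Fin n, (∀ i, (v i ∈ D ↔ ¬ i = i₀)) → δ ≤ G v := by
        intro v hv
        apply hGood
        have : S₀.filter (fun i => v i ∈ D) = S₀.filter (fun i => i ≠ i₀) :=
          Finset.filter_congr (fun i _ => by rw [hv i])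
        rw [this, Finset.filter_ne', Finset.card_erase_of_mem hi₀]
        have h1 : 1 ≤ S₀.card := Finset.card_pos.2 ⟨i₀, hi₀⟩
        exact Nat.Even.sub_odd h1 he odd_one
      have key := inject_count (fun i => ¬ i = i₀) D G hG0 δ hGood'
      have hcc : Fintype.card {i : Fin k // ¬ ¬ i = i₀} = 1 := by
        rw [Fintype.card_congr (Equiv.subtypeEquivRight (q := fun i => i = i₀)
          (fun i => by tauto))]
        exact Fintype.card_subtype_eq i₀
      rw [Fintype.card_subtype_compl, Fintype.card_subtype_eq, Fintype.card_fin, hcc,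
        Nat.descFactorial_one] at key
      refine le_trans ?_ key
      have ht : k - 1 ≤ d := by omega
      have hdf : ((n:ℝ)/4)^(k-1) ≤ ((d.descFactorial (k-1)) : ℝ) := by
        refine le_trans ?_ (desc_ge (k-1) d ht)
        apply pow_le_pow_left₀ hnn
        rw [← hkr]
        have hk1 : (1:ℝ) ≤ k := by exact_mod_cast hk
        linarith
      rw [hmin]
      have h2 : ((n:ℝ)/4)^(k-1) * ((n:ℝ) - d) / 2 ≤ (d.descFactorial (k-1) : ℝ) * ((n:ℝ)-d) := by
        have h0 : (0:ℝ) ≤ ((n:ℝ)/4)^(k-1) := by positivity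
        nlinarith [mul_le_mul_of_nonneg_right hdf (show (0:ℝ) ≤ (n:ℝ)-d by linarith),
          mul_nonneg h0 (show (0:ℝ) ≤ (n:ℝ)-d by linarith)]
      calc δ * (((n:ℝ)/4)^(k-1) * ((n:ℝ)-d) / 2)
          ≤ δ * ((d.descFactorial (k-1) : ℝ) * ((n:ℝ)-d)) := mul_le_mul_of_nonneg_left h2 hδ
        _ = δ * ((d.descFactorial (k-1) : ℝ) * (Dᶜ.card : ℝ)) := by rw [hDc]
        _ = δ * ((d.descFactorial (k-1) : ℝ) * ((Dᶜ.card : ℕ) : ℝ)) := by norm_num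
    · -- S₀.card odd : P := True
      have hGood' : ∀ v : Fin k ↪ Fin n, (∀ i, (v i ∈ D ↔ True)) → δ ≤ G v := by
        intro v hv
        apply hGood
        have : S₀.filter (fun i => v i ∈ D) = S₀ := by
          apply Finset.filter_true_of_mem
          intro i _; exact (hv i).2 trivial
        rw [this]; exact ho
      have key := inject_count (fun _ : Fin k => True) D G hG0 δ hGood'
      have hc1 : Fintype.card {i : Fin k // True} = k := by
        rw [Fintype.card_congr (Equiv.subtypeUnivEquiv (fun _ => trivial)), Fintype.card_fin]
      have hc2 : Fintype.card {i : Fin k // ¬ True} = 0 :=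
        Fintype.card_eq_zero_iff.2 ⟨fun x => x.2 trivial⟩
      rw [hc1, hc2, Nat.descFactorial_zero, Nat.cast_one, mul_one] at key
      refine le_trans ?_ key
      have ht : k ≤ d := by omega
      have hdf : ((n:ℝ)/4)^k ≤ ((d.descFactorial k) : ℝ) := by
        refine le_trans ?_ (desc_ge k d ht)
        apply pow_le_pow_left₀ hnn
        have hkr' : (k:ℝ) ≤ (n:ℝ)/4 := by linarith
        linarith
      rw [hmin]
      have hsplit : ((n:ℝ)/4)^k = ((n:ℝ)/4)^(k-1) * ((n:ℝ)/4) := by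
        conv_lhs => rw [show k = (k-1)+1 by omega]
        rw [pow_succ]
      have h0 : (0:ℝ) ≤ ((n:ℝ)/4)^(k-1) := by positivity
      have h2 : ((n:ℝ)/4)^(k-1) * ((n:ℝ) - d) / 2 ≤ ((n:ℝ)/4)^k := by
        rw [hsplit]
        have hle : ((n:ℝ) - d)/2 ≤ (n:ℝ)/4 := by linarith
        calc ((n:ℝ)/4)^(k-1) * ((n:ℝ) - d) / 2 = ((n:ℝ)/4)^(k-1) * (((n:ℝ) - d)/2) := by ring
          _ ≤ ((n:ℝ)/4)^(k-1) * ((n:ℝ)/4) := mul_le_mul_of_nonneg_left hle h0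
      calc δ * (((n:ℝ)/4)^(k-1) * ((n:ℝ)-d) / 2)
          ≤ δ * ((n:ℝ)/4)^k := mul_le_mul_of_nonneg_left h2 hδ
        _ ≤ δ * (d.descFactorial k : ℝ) := mul_le_mul_of_nonneg_left hdf hδ

set_option maxHeartbeats 2000000 in
/-- For every planting distribution `Q` of distribution complexity `r ≥ 2` there is a
constant `C > 0` such that for all large enough `n` and `m ≥ C·n^{r/2}·log n` there is an
estimator that, given `m` i.i.d. clauses from `Q_σ`, recovers `σ` up to sign with
probability at least `1 - ε`.  (Assignments and evaluations are encoded over `Bool`, with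
`true ↦ +1`, `false ↦ -1`; the negated assignment `-σ` is the pointwise boolean negation.
The success probability of the estimator `f` is written as the finite sum, over all
`m`-tuples of clauses `c` on which `f` succeeds, of the product of the clause
probabilities `Q_σ(c j)`.) -/
theorem planted_csp_recovery (k : ℕ) (hk : 2 ≤ k)
    (Q : (Fin k → Bool) → ℝ) (hQ01 : ∀ z, Q z ∈ Set.Icc (0:ℝ) 1) (hQ1 : ∑ z, Q z = 1)
    (r : ℕ) (hr : 2 ≤ r)
    (hcomplexAt : ∃ S : Finset (Fin k), S.Nonempty ∧ S.card = r ∧ cubeFourierCoeff Q S ≠ 0)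
    (hcomplexMin : ∀ S : Finset (Fin k), S.Nonempty → S.card < r → cubeFourierCoeff Q S = 0) :
    ∃ C : ℝ, 0 < C ∧
      ∀ ε : ℝ, 0 < ε →
        ∃ N : ℕ, ∀ n : ℕ, N ≤ n → ∀ m : ℕ,
          C * (n : ℝ) ^ ((r : ℝ) / 2) * Real.log n ≤ (m : ℝ) →
          ∃ f : (Fin m → Clause k n) → (Fin n → Bool),
            ∀ σ : Fin n → Bool,
              1 - ε ≤
                ∑ c ∈ Finset.univ.filter
                    (fun c : Fin m → Clause k n =>
                      f c = σ ∨ f c = fun i => !(σ i)),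
                  ∏ j : Fin m, plantedProb Q σ (c j) := by
  classical
  obtain ⟨S₀, hS₀ne, hS₀card, hS₀coef⟩ := hcomplexAt
  have hQ0 : ∀ z, 0 ≤ Q z := fun z => (hQ01 z).1
  -- the inner Hellinger-type functional and the set of "good" flip patterns
  set Inner : (Fin k → Bool) → ℝ := fun T => ∑ b : Fin k → Bool,
    (Real.sqrt (Q b) - Real.sqrt (Q (fun i => b i == T i)))^2 with hInner
  set GoodT : Finset (Fin k → Bool) :=
    Finset.univ.filter (fun T => ∃ x, Q (fun i => x i == T i) ≠ Q x) with hGoodT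
  obtain ⟨i₀, hi₀⟩ := hS₀ne
  have hT₀mem : (fun i => !(decide (i = i₀)) : Fin k → Bool) ∈ GoodT := by
    rw [hGoodT, Finset.mem_filter]
    refine ⟨Finset.mem_univ _, fourier_flip Q S₀ hS₀coef _ ?_⟩
    have heq : S₀.filter (fun i => (!(decide (i = i₀))) = false)
        = S₀.filter (fun i => i = i₀) := by
      apply Finset.filter_congr
      intro i _
      simp
    rw [heq, Finset.filter_eq', if_pos hi₀, Finset.card_singleton]
    exact odd_one
  have hGoodNe : GoodT.Nonempty := ⟨_, hT₀mem⟩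
  set δ₀ : ℝ := GoodT.inf' hGoodNe Inner with hδ₀
  have hδpos : 0 < δ₀ := by
    rw [hδ₀, Finset.lt_inf'_iff]
    intro T hT
    rw [hGoodT, Finset.mem_filter] at hT
    obtain ⟨x, hx⟩ := hT.2
    have hne : Real.sqrt (Q x) - Real.sqrt (Q (fun i => x i == T i)) ≠ 0 := by
      intro h
      exact hx (((Real.sqrt_inj (hQ0 _) (hQ0 _)).1 (by linarith [sub_eq_zero.1 h])).symm)
    refine Finset.sum_pos' (fun b _ => sq_nonneg _) ⟨x, Finset.mem_univ x, ?_⟩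
    exact (sq_nonneg _).lt_of_ne' (pow_ne_zero 2 hne)
  set β : ℝ := δ₀ / 4^k with hβ
  have hβpos : 0 < β := div_pos hδpos (by positivity)
  refine ⟨3/β, by positivity, ?_⟩
  intro ε hε
  obtain ⟨N₀, hN₀⟩ := exists_nat_gt (4/ε)
  refine ⟨max (4*k) (max 2 N₀), ?_⟩
  intro n hn m hm
  have hn4k : 4*k ≤ n := le_trans (le_max_left _ _) hn
  have hn2 : 2 ≤ n := le_trans (le_trans (le_max_left _ _) (le_max_right _ _)) hn
  have hnN₀ : N₀ ≤ n := le_trans (le_trans (le_max_right _ _) (le_max_right _ _)) hn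
  have hkn : k ≤ n := by omega
  have hnR : (2:ℝ) ≤ n := by exact_mod_cast hn2
  have hnpos : (0:ℝ) < n := by linarith
  have hεn : 4/(n:ℝ) < ε := by
    have h1 : 4/ε < (N₀ : ℝ) := hN₀
    have h2 : (N₀:ℝ) ≤ n := by exact_mod_cast hnN₀
    have h3 : 4/ε < (n:ℝ) := lt_of_lt_of_le h1 h2
    have h4 : (4:ℝ) < (n:ℝ) * ε := (div_lt_iff₀ hε).1 h3
    rw [div_lt_iff₀ hnpos]
    calc (4:ℝ) < (n:ℝ) * ε := h4
      _ = ε * n := mul_comm _ _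
  -- normalization constant
  set A : ℝ := (n.descFactorial k : ℝ) with hA
  have hApos : 0 < A := by
    rw [hA]
    have : n.descFactorial k ≠ 0 := by
      intro h0
      exact absurd (Nat.descFactorial_eq_zero_iff_lt.1 h0) (not_lt.2 hkn)
    exact_mod_cast Nat.pos_of_ne_zero this
  set p : (Fin n → Bool) → Clause k n → ℝ := fun s C => Q (clauseEval s C) / A with hp
  have hp_eq : ∀ s C, plantedProb Q s C = p s C := fun s C => plantedProb_eq Q hQ1 s C
  have hp0 : ∀ s C, 0 ≤ p s C := fun s C => div_nonneg (hQ0 _) hApos.le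
  have hpsum : ∀ s : Fin n → Bool, ∑ C : Clause k n, p s C = 1 := by
    intro s
    simp only [hp]
    rw [← Finset.sum_div, normalizer_eq Q hQ1 s, ← hA, div_self hApos.ne']
  -- m is big
  have hm' : (3/β) * (n:ℝ) * Real.log n ≤ m := by
    refine le_trans ?_ hm
    have hr2 : (2:ℝ) ≤ (r:ℝ) := by exact_mod_cast hr
    have h1 : (n:ℝ) ≤ (n:ℝ) ^ ((r:ℝ)/2) := by
      have h := Real.rpow_le_rpow_of_exponent_le (by linarith : (1:ℝ) ≤ (n:ℝ))
        (by linarith : (1:ℝ) ≤ (r:ℝ)/2)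
      rwa [Real.rpow_one] at h
    have hlog : 0 ≤ Real.log n := Real.log_nonneg (by linarith)
    have hc : 0 ≤ 3/β := by positivity
    calc 3/β * (n:ℝ) * Real.log n ≤ 3/β * ((n:ℝ) ^ ((r:ℝ)/2)) * Real.log n := by
          apply mul_le_mul_of_nonneg_right _ hlog
          exact mul_le_mul_of_nonneg_left h1 hc
      _ = 3/β * (n:ℝ) ^ ((r:ℝ)/2) * Real.log n := by ring
  -- the maximum-likelihood estimator
  set L : (Fin n → Bool) → (Fin m → Clause k n) → ℝ := fun s c => ∏ j, p s (c j) with hL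
  have hfex : ∀ c : Fin m → Clause k n, ∃ s : Fin n → Bool,
      ∀ t : Fin n → Bool, L t c ≤ L s c := by
    intro c
    obtain ⟨s, -, hs⟩ := Finset.exists_max_image Finset.univ (fun t => L t c)
      Finset.univ_nonempty
    exact ⟨s, fun t => hs t (Finset.mem_univ t)⟩
  choose f hf using hfex
  refine ⟨f, ?_⟩
  intro σ
  -- disagreement sets
  set Ds : (Fin n → Bool) → Finset (Fin n) :=
    fun s => Finset.univ.filter (fun v => ¬ σ v = s v) with hDs
  set g : (Fin n → Bool) → Finset (Fin n) :=
    fun s => if 2*(Ds s).card ≤ n then Ds s else (Ds s)ᶜ with hg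
  set q : ℝ := Real.exp (-(β * m / n)) with hq
  have hq0 : 0 < q := Real.exp_pos _
  have hbool1 : ∀ a b : Bool, ¬ a = b → b = !a := by decide
  have hbool2 : ∀ a b : Bool, ¬ ¬ a = b → b = a := by decide
  have hmemDs : ∀ (s : Fin n → Bool) (v : Fin n), v ∈ Ds s ↔ ¬ σ v = s v := by
    intro s v
    simp [hDs]
  -- bounds on the disagreement count
  have hDbounds : ∀ s : Fin n → Bool, s ≠ σ → s ≠ (fun i => !(σ i)) →
      1 ≤ (Ds s).card ∧ (Ds s).card ≤ n - 1 := by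
    intro s hs1 hs2
    constructor
    · rw [Nat.one_le_iff_ne_zero]
      intro h0
      apply hs1
      have hemp : Ds s = ∅ := Finset.card_eq_zero.1 h0
      rw [hDs] at hemp
      rw [Finset.filter_eq_empty_iff] at hemp
      funext v
      have := hemp (Finset.mem_univ v)
      exact (hbool2 _ _ this)
    · by_contra hlt
      push_neg at hlt
      have hcle : (Ds s).card ≤ n := by
        have := Finset.card_le_univ (Ds s)
        rwa [Fintype.card_fin] at this
      have hceq : (Ds s).card = n := by omega
      apply hs2
      funext v
      have huniv : Ds s = Finset.univ := by
        apply Finset.eq_univ_of_card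
        rw [hceq, Fintype.card_fin]
      have hv : v ∈ Ds s := huniv ▸ Finset.mem_univ v
      rw [hDs, Finset.mem_filter] at hv
      exact hbool1 _ _ hv.2
  have hdlen : ∀ s : Fin n → Bool, (Ds s).card ≤ n := by
    intro s
    have := Finset.card_le_univ (Ds s)
    rwa [Fintype.card_fin] at this
  have hgcard : ∀ s : Fin n → Bool,
      ((g s).card : ℝ) = min ((Ds s).card : ℝ) ((n:ℝ) - (Ds s).card) := by
    intro s
    simp only [hg]
    by_cases hc : 2*(Ds s).card ≤ n
    · rw [if_pos hc, min_eq_left]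
      have : 2*((Ds s).card:ℝ) ≤ n := by exact_mod_cast hc
      linarith
    · rw [if_neg hc, Finset.card_compl, Fintype.card_fin, Nat.cast_sub (hdlen s),
        min_eq_right]
      have : (n:ℝ) < 2*((Ds s).card:ℝ) := by exact_mod_cast Nat.lt_of_not_le hc
      linarith
  -- the per-pair Bhattacharyya/Hellinger bound
  have key1 : ∀ s : Fin n → Bool, s ≠ σ → s ≠ (fun i => !(σ i)) →
      (∑ C : Clause k n, Real.sqrt (p σ C * p s C))
        ≤ Real.exp (-(β * ((g s).card:ℝ) / (n:ℝ))) := by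
    intro s hs1 hs2
    obtain ⟨hd1, hd2⟩ := hDbounds s hs1 hs2
    set W : ℝ := ∑ C : Clause k n,
      (Real.sqrt (Q (clauseEval σ C)) - Real.sqrt (Q (clauseEval s C)))^2 with hWdef
    have hWsum : W = ∑ v : Fin k ↪ Fin n, Inner (fun i => σ (v i) == s (v i)) := by
      rw [hWdef, clause_sum σ]
      apply Finset.sum_congr rfl
      intro v _
      simp only [hInner]
      apply Finset.sum_congr rfl
      intro b _
      rw [eval_mkClause_self, eval_mkClause_other]
    have hWlow : δ₀ * (((n:ℝ)/4)^(k-1)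
        * min ((Ds s).card : ℝ) ((n:ℝ) - (Ds s).card) / 2) ≤ W := by
      rw [hWsum]
      refine count_lemma (by omega) S₀ ⟨i₀, hi₀⟩ hn4k (Ds s) hd1 hd2 _
        (fun v => by simp only [hInner]; exact Finset.sum_nonneg fun b _ => sq_nonneg _)
        δ₀ hδpos.le ?_
      intro v hodd
      apply Finset.inf'_le
      rw [hGoodT, Finset.mem_filter]
      refine ⟨Finset.mem_univ _, fourier_flip Q S₀ hS₀coef _ ?_⟩
      have heq2 : S₀.filter (fun i => (σ (v i) == s (v i)) = false)
          = S₀.filter (fun i => v i ∈ Ds s) := by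
        apply Finset.filter_congr
        intro i _
        rw [hDs]
        simp [Finset.mem_filter]
      rw [heq2]
      exact hodd
    have hsq : ∀ C : Clause k n, Real.sqrt (p σ C * p s C)
        = Real.sqrt (Q (clauseEval σ C) * Q (clauseEval s C)) / A := by
      intro C
      simp only [hp]
      rw [show Q (clauseEval σ C) / A * (Q (clauseEval s C) / A)
        = (Q (clauseEval σ C) * Q (clauseEval s C)) / A^2 by ring]
      rw [Real.sqrt_div (mul_nonneg (hQ0 _) (hQ0 _)), Real.sqrt_sq hApos.le]
    have hWexp : ∑ C : Clause k n,
        Real.sqrt (Q (clauseEval σ C) * Q (clauseEval s C)) = A - W/2 := by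
      have hterm : ∀ C : Clause k n,
          (Real.sqrt (Q (clauseEval σ C)) - Real.sqrt (Q (clauseEval s C)))^2
          = Q (clauseEval σ C) + Q (clauseEval s C)
            - 2 * Real.sqrt (Q (clauseEval σ C) * Q (clauseEval s C)) := by
        intro C
        rw [sub_sq, Real.sq_sqrt (hQ0 _), Real.sq_sqrt (hQ0 _), Real.sqrt_mul (hQ0 _)]
        ring
      have hW2 : W = 2*A - 2 * ∑ C : Clause k n,
          Real.sqrt (Q (clauseEval σ C) * Q (clauseEval s C)) := by
        rw [hWdef]
        rw [Finset.sum_congr rfl (fun C _ => hterm C)]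
        rw [Finset.sum_sub_distrib, Finset.sum_add_distrib, ← Finset.mul_sum]
        rw [normalizer_eq Q hQ1 σ, normalizer_eq Q hQ1 s, ← hA]
        ring
      linarith
    have hrho : ∑ C : Clause k n, Real.sqrt (p σ C * p s C) = 1 - W/(2*A) := by
      have hAne : A ≠ 0 := hApos.ne'
      rw [Finset.sum_congr rfl (fun C _ => hsq C), ← Finset.sum_div, hWexp,
        sub_div, div_self hAne]
      ring
    have hAub : A ≤ (n:ℝ)^k := by
      rw [hA]
      exact_mod_cast Nat.descFactorial_le_pow n k
    obtain ⟨k1, hk1⟩ : ∃ k1, k = k1 + 1 := ⟨k-1, by omega⟩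
    have hkey : β * ((g s).card:ℝ) / n ≤ W / (2*A) := by
      have hWlow' : δ₀ * (((n:ℝ)/4)^(k-1) * ((g s).card:ℝ) / 2) ≤ W := by
        rw [hgcard s]
        exact hWlow
      rw [div_le_div_iff₀ hnpos (by linarith : (0:ℝ) < 2*A)]
      have he0 : (0:ℝ) ≤ ((g s).card : ℝ) := Nat.cast_nonneg _
      have h1 : β * ((g s).card:ℝ) * (2*A) ≤ β * ((g s).card:ℝ) * (2*(n:ℝ)^k) := by
        apply mul_le_mul_of_nonneg_left (by linarith) (by positivity)
      have h2 : β * ((g s).card:ℝ) * (2*(n:ℝ)^k)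
          = δ₀ * (((n:ℝ)/4)^(k-1) * ((g s).card:ℝ) / 2) * n := by
        rw [hβ, hk1]
        simp only [Nat.add_sub_cancel]
        rw [pow_succ, pow_succ]
        field_simp
        have h4 : ((1:ℝ)/4)^k1 * 4^k1 = 1 := by rw [← mul_pow]; norm_num
        linear_combination (-(((g s).card:ℝ) * (n:ℝ)^k1 * 4)) * h4
      have h3 : δ₀ * (((n:ℝ)/4)^(k-1) * ((g s).card:ℝ) / 2) * n ≤ W * n :=
        mul_le_mul_of_nonneg_right hWlow' hnpos.le
      linarith
    rw [hrho]
    have hstep : 1 - W/(2*A) ≤ 1 - β*((g s).card:ℝ)/n := by linarith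
    refine le_trans hstep ?_
    have := Real.add_one_le_exp (-(β*((g s).card:ℝ)/n))
    linarith
  -- total mass is one
  have htot : ∑ c : Fin m → Clause k n, ∏ j, p σ (c j) = 1 := by
    calc ∑ c : Fin m → Clause k n, ∏ j, p σ (c j)
        = ∏ _j : Fin m, ∑ C : Clause k n, p σ C :=
          (Fintype.prod_sum (fun (_ : Fin m) (C : Clause k n) => p σ C)).symm
      _ = 1 := by
          rw [Finset.prod_congr rfl (fun j _ => hpsum σ)]
          simp
  -- fiber bound for each wrong assignment
  have hfiber : ∀ s : Fin n → Bool, s ≠ σ → s ≠ (fun i => !(σ i)) →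
      ∑ c ∈ (Finset.univ.filter (fun c : Fin m → Clause k n =>
          ¬(f c = σ ∨ f c = fun i => !(σ i)))).filter (fun c => f c = s),
        ∏ j, p σ (c j) ≤ q ^ (g s).card := by
    intro s hs1 hs2
    have hsub : (Finset.univ.filter (fun c : Fin m → Clause k n =>
        ¬(f c = σ ∨ f c = fun i => !(σ i)))).filter (fun c => f c = s)
        ⊆ Finset.univ.filter (fun c : Fin m → Clause k n => L σ c ≤ L s c) := by
      intro c hc
      rw [Finset.mem_filter] at hc
      rw [Finset.mem_filter]
      refine ⟨Finset.mem_univ _, ?_⟩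
      have hmax := hf c σ
      rwa [hc.2] at hmax
    have hpoint : ∀ c ∈ Finset.univ.filter
        (fun c : Fin m → Clause k n => L σ c ≤ L s c),
        ∏ j, p σ (c j) ≤ ∏ j, Real.sqrt (p σ (c j) * p s (c j)) := by
      intro c hc
      rw [Finset.mem_filter] at hc
      have hLle : ∏ j, p σ (c j) ≤ ∏ j, p s (c j) := hc.2
      have h1 : Real.sqrt ((∏ j, p σ (c j)) * ∏ j, p s (c j))
          = ∏ j, Real.sqrt (p σ (c j) * p s (c j)) := by
        rw [← Finset.prod_mul_distrib,
          sqrt_prod _ _ (fun j => mul_nonneg (hp0 _ _) (hp0 _ _))]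
      have ha : 0 ≤ ∏ j, p σ (c j) := Finset.prod_nonneg fun j _ => hp0 _ _
      calc ∏ j, p σ (c j)
          = Real.sqrt ((∏ j, p σ (c j)) * ∏ j, p σ (c j)) :=
            (Real.sqrt_mul_self ha).symm
        _ ≤ Real.sqrt ((∏ j, p σ (c j)) * ∏ j, p s (c j)) :=
            Real.sqrt_le_sqrt (mul_le_mul_of_nonneg_left hLle ha)
        _ = ∏ j, Real.sqrt (p σ (c j) * p s (c j)) := h1
    calc ∑ c ∈ (Finset.univ.filter (fun c : Fin m → Clause k n =>
            ¬(f c = σ ∨ f c = fun i => !(σ i)))).filter (fun c => f c = s),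
          ∏ j, p σ (c j)
        ≤ ∑ c ∈ Finset.univ.filter
            (fun c : Fin m → Clause k n => L σ c ≤ L s c), ∏ j, p σ (c j) :=
          Finset.sum_le_sum_of_subset_of_nonneg hsub
            (fun c _ _ => Finset.prod_nonneg fun j _ => hp0 _ _)
      _ ≤ ∑ c ∈ Finset.univ.filter
            (fun c : Fin m → Clause k n => L σ c ≤ L s c),
            ∏ j, Real.sqrt (p σ (c j) * p s (c j)) :=
          Finset.sum_le_sum hpoint
      _ ≤ ∑ c : Fin m → Clause k n, ∏ j, Real.sqrt (p σ (c j) * p s (c j)) :=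
          Finset.sum_le_sum_of_subset_of_nonneg (Finset.filter_subset _ _)
            (fun c _ _ => Finset.prod_nonneg fun j _ => Real.sqrt_nonneg _)
      _ = ∏ _j : Fin m, ∑ C : Clause k n, Real.sqrt (p σ C * p s C) :=
          (Fintype.prod_sum (fun (_ : Fin m) (C : Clause k n) =>
            Real.sqrt (p σ C * p s C))).symm
      _ = (∑ C : Clause k n, Real.sqrt (p σ C * p s C))^m := by
          rw [Finset.prod_const, Finset.card_univ, Fintype.card_fin]
      _ ≤ (Real.exp (-(β * ((g s).card:ℝ) / (n:ℝ))))^m :=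
          pow_le_pow_left₀
            (Finset.sum_nonneg fun C _ => Real.sqrt_nonneg _) (key1 s hs1 hs2) m
      _ = q ^ (g s).card := by
          rw [hq, ← Real.exp_nat_mul, ← Real.exp_nat_mul]
          congr 1
          ring
  -- summing over the wrong assignments
  have hbadsum : ∑ c ∈ Finset.univ.filter (fun c : Fin m → Clause k n =>
      ¬(f c = σ ∨ f c = fun i => !(σ i))), ∏ j, p σ (c j)
      ≤ 2 * ((q+1)^n - 1) := by
    have hmaps : ∀ c ∈ Finset.univ.filter (fun c : Fin m → Clause k n =>
        ¬(f c = σ ∨ f c = fun i => !(σ i))),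
        f c ∈ Finset.univ.filter (fun s : Fin n → Bool =>
          ¬(s = σ ∨ s = fun i => !(σ i))) := by
      intro c hc
      rw [Finset.mem_filter] at hc ⊢
      exact ⟨Finset.mem_univ _, hc.2⟩
    rw [← Finset.sum_fiberwise_of_maps_to hmaps (fun c => ∏ j, p σ (c j))]
    have hstep1 : ∑ s ∈ Finset.univ.filter (fun s : Fin n → Bool =>
        ¬(s = σ ∨ s = fun i => !(σ i))),
        ∑ c ∈ (Finset.univ.filter (fun c : Fin m → Clause k n =>
          ¬(f c = σ ∨ f c = fun i => !(σ i)))).filter (fun c => f c = s),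
        ∏ j, p σ (c j)
        ≤ ∑ s ∈ Finset.univ.filter (fun s : Fin n → Bool =>
          ¬(s = σ ∨ s = fun i => !(σ i))), q ^ (g s).card := by
      apply Finset.sum_le_sum
      intro s hsmem
      rw [Finset.mem_filter] at hsmem
      push_neg at hsmem
      exact hfiber s hsmem.2.1 hsmem.2.2
    refine le_trans hstep1 ?_
    -- now fiber over the chosen disagreement sets
    have hmaps2 : ∀ s ∈ Finset.univ.filter (fun s : Fin n → Bool =>
        ¬(s = σ ∨ s = fun i => !(σ i))),
        g s ∈ Finset.univ.filter (fun E : Finset (Fin n) => E.Nonempty) := by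
      intro s hsmem
      rw [Finset.mem_filter] at hsmem ⊢
      push_neg at hsmem
      obtain ⟨hd1, hd2⟩ := hDbounds s hsmem.2.1 hsmem.2.2
      refine ⟨Finset.mem_univ _, ?_⟩
      rw [← Finset.card_pos]
      simp only [hg]
      by_cases hc : 2*(Ds s).card ≤ n
      · rw [if_pos hc]; omega
      · rw [if_neg hc, Finset.card_compl, Fintype.card_fin]; omega
    rw [← Finset.sum_fiberwise_of_maps_to hmaps2 (fun s => q ^ (g s).card)]
    have hfibcard : ∀ E ∈ Finset.univ.filter
        (fun E : Finset (Fin n) => E.Nonempty),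
        ∑ s ∈ (Finset.univ.filter (fun s : Fin n → Bool =>
          ¬(s = σ ∨ s = fun i => !(σ i)))).filter (fun s => g s = E),
          q ^ (g s).card ≤ 2 * q ^ E.card := by
      intro E _
      have hcongr : ∑ s ∈ (Finset.univ.filter (fun s : Fin n → Bool =>
          ¬(s = σ ∨ s = fun i => !(σ i)))).filter (fun s => g s = E),
          q ^ (g s).card
          = ∑ _s ∈ (Finset.univ.filter (fun s : Fin n → Bool =>
          ¬(s = σ ∨ s = fun i => !(σ i)))).filter (fun s => g s = E),
          q ^ E.card := by
        apply Finset.sum_congr rfl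
        intro s hs
        rw [Finset.mem_filter] at hs
        rw [hs.2]
      rw [hcongr, Finset.sum_const, nsmul_eq_mul]
      have hsubfib : (Finset.univ.filter (fun s : Fin n → Bool =>
          ¬(s = σ ∨ s = fun i => !(σ i)))).filter (fun s => g s = E)
          ⊆ {fun v => if v ∈ E then !(σ v) else σ v,
             fun v => if v ∈ E then σ v else !(σ v)} := by
        intro s hs
        rw [Finset.mem_filter] at hs
        have hgE := hs.2
        rw [Finset.mem_insert, Finset.mem_singleton]
        simp only [hg] at hgE
        by_cases hc : 2*(Ds s).card ≤ n
        · rw [if_pos hc] at hgE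
          left
          funext v
          by_cases hv : v ∈ E
          · rw [if_pos hv]
            exact hbool1 _ _ ((hmemDs s v).1 (hgE ▸ hv))
          · rw [if_neg hv]
            have h2 : ¬ v ∈ Ds s := fun h => hv (hgE ▸ h)
            exact hbool2 _ _ (fun hne => h2 ((hmemDs s v).2 hne))
        · rw [if_neg hc] at hgE
          right
          funext v
          by_cases hv : v ∈ E
          · rw [if_pos hv]
            have h1 : v ∈ (Ds s)ᶜ := hgE ▸ hv
            have h2 : ¬ v ∈ Ds s := Finset.mem_compl.1 h1
            exact hbool2 _ _ (fun hne => h2 ((hmemDs s v).2 hne))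
          · rw [if_neg hv]
            have h2 : v ∈ Ds s := by
              by_contra hnot
              exact hv (hgE ▸ Finset.mem_compl.2 hnot)
            exact hbool1 _ _ ((hmemDs s v).1 h2)
      have hcard2 : ((Finset.univ.filter (fun s : Fin n → Bool =>
          ¬(s = σ ∨ s = fun i => !(σ i)))).filter (fun s => g s = E)).card ≤ 2 := by
        refine le_trans (Finset.card_le_card hsubfib) ?_
        refine le_trans (Finset.card_insert_le _ _) ?_
        simp
      have hqpow0 : (0:ℝ) ≤ q ^ E.card := by positivity
      exact mul_le_mul_of_nonneg_right (by exact_mod_cast hcard2) hqpow0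
    refine le_trans (Finset.sum_le_sum hfibcard) ?_
    rw [← Finset.mul_sum]
    have hNEsum : ∑ E ∈ Finset.univ.filter (fun E : Finset (Fin n) => E.Nonempty),
        q ^ E.card ≤ (q+1)^n - 1 := by
      have htotE : ∑ E : Finset (Fin n), q^E.card = (q+1)^n := by
        calc ∑ E : Finset (Fin n), q^E.card
            = ∑ E : Finset (Fin n), (∏ _a ∈ E, q) * ∏ _a ∈ Eᶜ, (1:ℝ) := by
              apply Finset.sum_congr rfl
              intro E _
              rw [Finset.prod_const, Finset.prod_const, one_pow, mul_one]
          _ = ∏ _a : Fin n, (q + 1) := (Fintype.prod_add _ _).symm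
          _ = (q+1)^n := by rw [Finset.prod_const, Finset.card_univ, Fintype.card_fin]
      have hsplitE := Finset.sum_filter_add_sum_filter_not Finset.univ
        (fun E : Finset (Fin n) => E.Nonempty) (fun E => q ^ E.card)
      have hemptyE : ∑ E ∈ Finset.univ.filter
          (fun E : Finset (Fin n) => ¬ E.Nonempty), q ^ E.card = 1 := by
        have : Finset.univ.filter (fun E : Finset (Fin n) => ¬ E.Nonempty)
            = {∅} := by
          ext E
          simp [Finset.not_nonempty_iff_eq_empty]
        rw [this, Finset.sum_singleton, Finset.card_empty, pow_zero]
      rw [htotE] at hsplitE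
      linarith
    have h2pos : (0:ℝ) ≤ 2 := by norm_num
    linarith [mul_le_mul_of_nonneg_left hNEsum h2pos]
  -- numeric endgame
  have hq1 : q ≤ ((n:ℝ)^3)⁻¹ := by
    have h6 : β*((3/β)*(n:ℝ)*Real.log n) = 3*(n:ℝ)*Real.log n := by
      field_simp
    have h7 : β*((3/β)*(n:ℝ)*Real.log n) ≤ β*m :=
      mul_le_mul_of_nonneg_left hm' hβpos.le
    have h5 : 3*Real.log n ≤ β*m/n := by
      rw [le_div_iff₀ hnpos]
      linarith
    have h8 : q ≤ Real.exp (-(3*Real.log n)) := by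
      rw [hq]
      apply Real.exp_le_exp.2
      linarith
    have h9 : Real.exp (-(3*Real.log n)) = ((n:ℝ)^3)⁻¹ := by
      rw [Real.exp_neg]
      congr 1
      rw [show (3:ℝ)*Real.log n = ((3:ℕ):ℝ)*Real.log n by norm_num,
        Real.exp_nat_mul, Real.exp_log hnpos]
    rw [h9] at h8
    exact h8
  have hn3pos : (0:ℝ) < (n:ℝ)^3 := by positivity
  have hqn : (n:ℝ)*q ≤ ((n:ℝ)^2)⁻¹ := by
    have h1 : (n:ℝ)*q ≤ (n:ℝ)*((n:ℝ)^3)⁻¹ := mul_le_mul_of_nonneg_left hq1 hnpos.le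
    have h2 : (n:ℝ)*((n:ℝ)^3)⁻¹ = ((n:ℝ)^2)⁻¹ := by
      field_simp
    linarith
  have hqn2 : (n:ℝ)*q ≤ 1/2 := by
    have h1 : (2:ℝ) ≤ (n:ℝ)^2 := by nlinarith
    have h2 : ((n:ℝ)^2)⁻¹ ≤ (2:ℝ)⁻¹ := by
      apply inv_anti₀ (by norm_num) h1
    have : (2:ℝ)⁻¹ = 1/2 := by norm_num
    linarith
  have hqpow : (q+1)^n ≤ Real.exp ((n:ℝ)*q) := by
    have h1 : q+1 ≤ Real.exp q := Real.add_one_le_exp q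
    calc (q+1)^n ≤ (Real.exp q)^n := pow_le_pow_left₀ (by positivity) h1 n
      _ = Real.exp ((n:ℝ)*q) := (Real.exp_nat_mul q n).symm
  have hexp2 : Real.exp ((n:ℝ)*q) ≤ 1 + 2*((n:ℝ)*q) := by
    set x := (n:ℝ)*q with hx
    have hx0 : 0 ≤ x := by positivity
    have hx2 : x ≤ 1/2 := hqn2
    have h1 : 1 - x ≤ Real.exp (-x) := by
      have := Real.add_one_le_exp (-x)
      linarith
    have h2 : Real.exp x * Real.exp (-x) = 1 := by
      rw [← Real.exp_add]
      simp
    nlinarith [mul_le_mul_of_nonneg_right h1 (Real.exp_pos x).le, Real.exp_pos x]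
  have hfinal : 2 * ((q+1)^n - 1) ≤ ε := by
    have h1 : 2*((q+1)^n - 1) ≤ 2*(Real.exp ((n:ℝ)*q) - 1) := by linarith
    have h2 : 2*(Real.exp ((n:ℝ)*q) - 1) ≤ 4*((n:ℝ)*q) := by linarith
    have h3 : 4*((n:ℝ)*q) ≤ 4*((n:ℝ)^2)⁻¹ := by linarith
    have h4 : ((n:ℝ)^2)⁻¹ ≤ (n:ℝ)⁻¹ := by
      apply inv_anti₀ hnpos
      nlinarith
    have h5 : 4*((n:ℝ)^2)⁻¹ ≤ 4/(n:ℝ) := by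
      rw [div_eq_mul_inv]
      linarith
    linarith
  -- final glue
  have hgoal_eq : ∑ c ∈ Finset.univ.filter (fun c : Fin m → Clause k n =>
      f c = σ ∨ f c = fun i => !(σ i)), ∏ j, plantedProb Q σ (c j)
      = ∑ c ∈ Finset.univ.filter (fun c : Fin m → Clause k n =>
      f c = σ ∨ f c = fun i => !(σ i)), ∏ j, p σ (c j) :=
    Finset.sum_congr rfl (fun c _ => Finset.prod_congr rfl (fun j _ => hp_eq σ (c j)))
  rw [hgoal_eq]
  have hsplit := Finset.sum_filter_add_sum_filter_not Finset.univ
    (fun c : Fin m → Clause k n => f c = σ ∨ f c = fun i => !(σ i))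
    (fun c => ∏ j, p σ (c j))
  rw [htot] at hsplit
  linarith [hbadsum, hfinal]
end

section
/- Let k ≥ 1 and let Q : {−1,1}^k → ℝ be nonnegative with ∑_{x ∈ {−1,1}^k} Q(x) = 1. Let S ⊆ {1,…,k} be nonempty and suppose that Q̂(T) = 0 for every nonempty proper subset T of S. Then for every z : S → {−1,1}, the marginal probability satisfies ∑_{x ∈ {−1,1}^k : x restricted to S equals z} Q(x) = 2^{−|S|} · (1 + 2^k · Q̂(S) · ∏_{i ∈ S} z_i). In particular, setting δ = 1 + 2^k · Q̂(S), this marginal equals δ·2^{−|S|} when ∏_{i ∈ S} z_i = 1 and (2−δ)·2^{−|S|} when ∏_{i ∈ S} z_i = −1. -/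
lemma indicator_eq_sum_powerset {k : ℕ} (S : Finset (Fin k)) (x z : Fin k → Bool) :
    (if ∀ i ∈ S, x i = z i then (2:ℝ)^S.card else 0) =
      ∑ T ∈ S.powerset, ∏ i ∈ T, sgn (x i) * sgn (z i) := by
  have h : ∀ i ∈ S, sgn (x i) * sgn (z i) + 1 = if x i = z i then 2 else 0 := by
    intro i _
    by_cases hxz : x i = z i
    · simp [hxz, sgn]; cases z i <;> norm_num
    · simp [hxz, sgn]
      cases hx : x i <;> cases hz : z i <;> simp_all <;> norm_num
  have := Finset.prod_add (fun i => sgn (x i) * sgn (z i)) (fun _ => (1:ℝ)) S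
  simp only [Finset.prod_const_one, mul_one] at this
  rw [← this, Finset.prod_congr rfl h]
  by_cases hall : ∀ i ∈ S, x i = z i
  · rw [if_pos hall]
    rw [Finset.prod_congr rfl (fun i hi => if_pos (hall i hi))]
    simp
  · rw [if_neg hall]
    push_neg at hall
    obtain ⟨i, hi, hne⟩ := hall
    exact (Finset.prod_eq_zero hi (by simp [hne])).symm

/-- If all Fourier coefficients of `Q` on nonempty proper subsets of `S` vanish, then the
marginal of `Q` on the coordinates in `S` is
`2^{-|S|}·(1 + 2ᵏ·Q̂(S)·∏_{i∈S} zᵢ)`; in particular, with `δ = 1 + 2ᵏ·Q̂(S)`, it equals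
`δ·2^{-|S|}` when `∏_{i∈S} zᵢ = 1` and `(2-δ)·2^{-|S|}` when `∏_{i∈S} zᵢ = -1`. -/
theorem marginal_of_fourier_vanishing_proper {k : ℕ} (hk : 1 ≤ k)
    (Q : (Fin k → Bool) → ℝ) (hQ0 : ∀ x, 0 ≤ Q x) (hQ1 : ∑ x, Q x = 1)
    (S : Finset (Fin k)) (hS : S.Nonempty)
    (hvan : ∀ T : Finset (Fin k), T.Nonempty → T ⊂ S → cubeFourierCoeff Q T = 0) :
    ∀ z : Fin k → Bool,
      (∑ x ∈ Finset.univ.filter (fun x : Fin k → Bool => ∀ i ∈ S, x i = z i), Q x) =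
        ((2 : ℝ) ^ S.card)⁻¹ * (1 + 2 ^ k * cubeFourierCoeff Q S * ∏ i ∈ S, sgn (z i)) ∧
      ((∏ i ∈ S, sgn (z i)) = 1 →
        (∑ x ∈ Finset.univ.filter (fun x : Fin k → Bool => ∀ i ∈ S, x i = z i), Q x) =
          (1 + 2 ^ k * cubeFourierCoeff Q S) * ((2 : ℝ) ^ S.card)⁻¹) ∧
      ((∏ i ∈ S, sgn (z i)) = -1 →
        (∑ x ∈ Finset.univ.filter (fun x : Fin k → Bool => ∀ i ∈ S, x i = z i), Q x) =
          (2 - (1 + 2 ^ k * cubeFourierCoeff Q S)) * ((2 : ℝ) ^ S.card)⁻¹) := by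
  intro z
  have hpow : ((2:ℝ)^S.card) ≠ 0 := by positivity
  have key : (∑ x ∈ Finset.univ.filter (fun x : Fin k → Bool => ∀ i ∈ S, x i = z i), Q x) =
      ((2 : ℝ) ^ S.card)⁻¹ * (1 + 2 ^ k * cubeFourierCoeff Q S * ∏ i ∈ S, sgn (z i)) := by
    have step1 : (∑ x ∈ Finset.univ.filter (fun x : Fin k → Bool => ∀ i ∈ S, x i = z i), Q x)
        * (2:ℝ)^S.card
        = ∑ x : Fin k → Bool, Q x * ∑ T ∈ S.powerset, ∏ i ∈ T, sgn (x i) * sgn (z i) := by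
      rw [Finset.sum_filter, Finset.sum_mul]
      refine Finset.sum_congr rfl fun x _ => ?_
      rw [← indicator_eq_sum_powerset]
      by_cases h : ∀ i ∈ S, x i = z i <;> simp [h]
    have step2 : ∑ x : Fin k → Bool, Q x * ∑ T ∈ S.powerset, ∏ i ∈ T, sgn (x i) * sgn (z i)
        = ∑ T ∈ S.powerset, (∏ i ∈ T, sgn (z i)) *
            (∑ x : Fin k → Bool, Q x * ∏ i ∈ T, sgn (x i)) := by
      simp only [Finset.mul_sum]
      rw [Finset.sum_comm]
      refine Finset.sum_congr rfl fun T _ => ?_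
      refine Finset.sum_congr rfl fun x _ => ?_
      rw [Finset.prod_mul_distrib]
      ring
    have hcoef : ∀ T : Finset (Fin k),
        (∑ x : Fin k → Bool, Q x * ∏ i ∈ T, sgn (x i)) = 2^k * cubeFourierCoeff Q T := by
      intro T
      rw [cubeFourierCoeff, ← mul_assoc, mul_inv_cancel₀ (by positivity), one_mul]
    have step3 : ∑ T ∈ S.powerset, (∏ i ∈ T, sgn (z i)) *
            (∑ x : Fin k → Bool, Q x * ∏ i ∈ T, sgn (x i))
        = 1 + 2 ^ k * cubeFourierCoeff Q S * ∏ i ∈ S, sgn (z i) := by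
      have hsub : ({∅, S} : Finset (Finset (Fin k))) ⊆ S.powerset := by
        intro T hT
        simp only [Finset.mem_insert, Finset.mem_singleton] at hT
        rcases hT with rfl | rfl <;> simp
      rw [← Finset.sum_subset hsub ?h1]
      · have hne : (∅ : Finset (Fin k)) ≠ S := fun h => hS.ne_empty h.symm
        have h0 : (∏ i ∈ (∅:Finset (Fin k)), sgn (z i)) * (2^k * cubeFourierCoeff Q ∅) = 1 := by
          simp only [cubeFourierCoeff, Finset.prod_empty, one_mul, mul_one]
          rw [hQ1, mul_one]
          field_simp
        rw [Finset.sum_pair hne, hcoef ∅, hcoef S, h0]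
        ring
      · intro T hT hTne
        simp only [Finset.mem_insert, Finset.mem_singleton, not_or] at hTne
        rw [Finset.mem_powerset] at hT
        have hT1 : T.Nonempty := Finset.nonempty_iff_ne_empty.mpr hTne.1
        have hT2 : T ⊂ S := lt_of_le_of_ne hT hTne.2
        rw [hcoef T, hvan T hT1 hT2]
        ring
    have := step1.trans (step2.trans step3)
    field_simp at this ⊢
    linarith [this]
  refine ⟨key, fun h1 => ?_, fun h1 => ?_⟩ <;> rw [key, h1] <;> ring
end

section
/- Let M be the centered block random matrix M(n₁,n₂,u,v,δ,q), and suppose n₁ is even and u is balanced (exactly n₁/2 coordinates of u equal +1). Then for every y ∈ ℝ^{n₂}, E[ ‖M y‖₂² ] = ‖y‖₂² · ( n₁ q − (n₁ q²/2)·(δ² + (2−δ)²) ) + (δ−1)² · q² · n₁ · (v · y)². -/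
open MeasureTheory ProbabilityTheory Matrix

/-- The centered block random matrix model `M(n₁,n₂,u,v,δ,q)`: the random matrix `M`
on the probability space `(Ω, μ)` has mutually independent entries, where entry `M i j`
equals `1 - q` with probability `δ*q` (when `u i * v j = 1`), resp. `(2-δ)*q`
(when `u i * v j = -1`), and equals `-q` otherwise. -/
structure IsCenteredBlockMatrix {n₁ n₂ : ℕ} (u : Fin n₁ → ℝ) (v : Fin n₂ → ℝ)
    (δ q : ℝ) {Ω : Type*} [MeasurableSpace Ω] (μ : Measure Ω)
    (M : Ω → Matrix (Fin n₁) (Fin n₂) ℝ) : Prop where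
  meas : ∀ i j, Measurable fun ω => M ω i j
  indep : iIndepFun
    (fun (p : Fin n₁ × Fin n₂) ω => M ω p.1 p.2) μ
  prob_hi : ∀ i j, μ {ω | M ω i j = 1 - q} =
    ENNReal.ofReal (if u i * v j = 1 then δ * q else (2 - δ) * q)
  prob_lo : ∀ i j, μ {ω | M ω i j = -q} =
    1 - ENNReal.ofReal (if u i * v j = 1 then δ * q else (2 - δ) * q)

lemma bern_comp {Ω : Type*} [MeasurableSpace Ω] {μ : Measure Ω} [IsProbabilityMeasure μ]
    {f : Ω → ℝ} (hf : Measurable f) {a b p : ℝ} (hab : a ≠ b) (hp0 : 0 ≤ p) (hp1 : p ≤ 1)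
    (hA : μ {ω | f ω = a} = ENNReal.ofReal p)
    (hB : μ {ω | f ω = b} = 1 - ENNReal.ofReal p)
    (φ : ℝ → ℝ) :
    Integrable (fun ω => φ (f ω)) μ ∧ ∫ ω, φ (f ω) ∂μ = φ a * p + φ b * (1 - p) := by
  have hAmeas : MeasurableSet {ω | f ω = a} := hf (measurableSet_singleton a)
  have hBmeas : MeasurableSet {ω | f ω = b} := hf (measurableSet_singleton b)
  have hae : ∀ᵐ ω ∂μ, f ω = a ∨ f ω = b := by
    rw [ae_iff]
    have hset : {ω | ¬(f ω = a ∨ f ω = b)} = ({ω | f ω = a} ∪ {ω | f ω = b})ᶜ := by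
      ext ω; simp [Set.mem_union]
    have hdisj : Disjoint {ω | f ω = a} {ω | f ω = b} := by
      rw [Set.disjoint_left]
      intro ω h1 h2
      exact hab (h1.symm.trans h2)
    rw [hset, measure_compl (hAmeas.union hBmeas) (measure_ne_top _ _),
      measure_union hdisj hBmeas, hA, hB, measure_univ,
      add_tsub_cancel_of_le (ENNReal.ofReal_le_one.mpr hp1), tsub_self]
  set g : Ω → ℝ := fun ω => {ω | f ω = a}.indicator (fun _ => φ a - φ b) ω + φ b with hgdef
  have heq : (fun ω => φ (f ω)) =ᵐ[μ] g := by
    filter_upwards [hae] with ω hω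
    rcases hω with h | h
    · simp only [hgdef, Set.indicator_of_mem (show ω ∈ {ω | f ω = a} from h), h]
      ring
    · have hnot : ω ∉ {ω | f ω = a} := fun hmem => hab (hmem.symm.trans h)
      simp only [hgdef, Set.indicator_of_notMem hnot, h, zero_add]
  have hgInt : Integrable g μ :=
    ((integrable_const (φ a - φ b)).indicator hAmeas).add (integrable_const (φ b))
  refine ⟨hgInt.congr heq.symm, ?_⟩
  rw [integral_congr_ae heq, hgdef]
  rw [integral_add ((integrable_const (φ a - φ b)).indicator hAmeas) (integrable_const (φ b)),
    integral_indicator_const _ hAmeas, integral_const, measureReal_def, measureReal_def, hA,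
    ENNReal.toReal_ofReal hp0, measure_univ]
  simp only [smul_eq_mul, ENNReal.toReal_one, one_mul]
  ring

/-- `E[‖M y‖₂²] = ‖y‖₂² · (n₁q - (n₁q²/2)(δ² + (2-δ)²)) + (δ-1)²·q²·n₁·(v ⬝ y)²`
for the centered block random matrix, when `n₁` is even and `u` is balanced. -/
theorem expectation_norm_sq_My {n₁ n₂ : ℕ}
    (u : Fin n₁ → ℝ) (v : Fin n₂ → ℝ) (δ q : ℝ)
    (hδ : δ ∈ Set.Icc (0:ℝ) 2) (hq : q ∈ Set.Ioo (0:ℝ) 1)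
    (hδq : δ * q ≤ 1) (hδq' : (2 - δ) * q ≤ 1)
    (hu : ∀ i, u i = 1 ∨ u i = -1) (hv : ∀ j, v j = 1 ∨ v j = -1)
    (hn₁ : Even n₁)
    (hbal : 2 * (Finset.univ.filter fun i => u i = 1).card = n₁)
    {Ω : Type*} [MeasurableSpace Ω] (μ : Measure Ω) [IsProbabilityMeasure μ]
    (M : Ω → Matrix (Fin n₁) (Fin n₂) ℝ)
    (hM : IsCenteredBlockMatrix u v δ q μ M) :
    ∀ y : Fin n₂ → ℝ,
      ∫ ω, ∑ i, ((M ω).mulVec y i) ^ 2 ∂μ =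
        (∑ j, (y j) ^ 2) * (↑n₁ * q - (↑n₁ * q ^ 2 / 2) * (δ ^ 2 + (2 - δ) ^ 2))
          + (δ - 1) ^ 2 * q ^ 2 * ↑n₁ * (v ⬝ᵥ y) ^ 2 := by
  intro y
  set P : Fin n₁ → Fin n₂ → ℝ := fun i j => if u i * v j = 1 then δ * q else (2 - δ) * q
    with hPdef
  have hP0 : ∀ i j, 0 ≤ P i j := by
    intro i j
    simp only [hPdef]
    split
    · exact mul_nonneg hδ.1 hq.1.le
    · exact mul_nonneg (by linarith [hδ.2]) hq.1.le
  have hP1 : ∀ i j, P i j ≤ 1 := by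
    intro i j
    simp only [hPdef]
    split
    · exact hδq
    · exact hδq'
  have hPab : (1 - q : ℝ) ≠ -q := by intro h; nlinarith [hq.1, hq.2]
  have hkey : ∀ (i : Fin n₁) (j : Fin n₂) (φ : ℝ → ℝ),
      Integrable (fun ω => φ (M ω i j)) μ ∧
      ∫ ω, φ (M ω i j) ∂μ = φ (1 - q) * P i j + φ (-q) * (1 - P i j) :=
    fun i j φ => bern_comp (hM.meas i j) hPab (hP0 i j) (hP1 i j)
      (hM.prob_hi i j) (hM.prob_lo i j) φ
  have hmean : ∀ i j, ∫ ω, M ω i j ∂μ = (δ - 1) * q * u i * v j := by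
    intro i j
    rw [(hkey i j (fun x => x)).2]
    rcases hu i with h1 | h1 <;> rcases hv j with h2 | h2 <;>
      simp only [hPdef, h1, h2] <;> norm_num <;> ring
  have hmeanP : ∀ i j, (δ - 1) * q * u i * v j = P i j - q := by
    intro i j
    rcases hu i with h1 | h1 <;> rcases hv j with h2 | h2 <;>
      simp only [hPdef, h1, h2] <;> norm_num <;> ring
  have hprod : ∀ (i : Fin n₁) (j k : Fin n₂),
      Integrable (fun ω => M ω i j * M ω i k) μ ∧
      ∫ ω, M ω i j * M ω i k ∂μ =
        ((δ - 1) * q * u i * v j) * ((δ - 1) * q * u i * v k) +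
          (if j = k then P i j * (1 - P i j) else 0) := by
    intro i j k
    by_cases hjk : j = k
    · subst hjk
      have h := hkey i j (fun x => x * x)
      refine ⟨h.1, ?_⟩
      rw [h.2, if_pos rfl, hmeanP i j]
      ring
    · have hind : IndepFun (fun ω => M ω i j) (fun ω => M ω i k) μ :=
        hM.indep.indepFun (show ((i, j) : Fin n₁ × Fin n₂) ≠ (i, k) by
          simp [Prod.ext_iff, hjk])
      have hInt1 := (hkey i j (fun x => x)).1
      have hInt2 := (hkey i k (fun x => x)).1
      refine ⟨hind.integrable_mul hInt1 hInt2, ?_⟩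
      rw [if_neg hjk, add_zero]
      have hmul := hind.integral_mul_eq_mul_integral hInt1.aestronglyMeasurable hInt2.aestronglyMeasurable
      calc ∫ ω, M ω i j * M ω i k ∂μ
          = ∫ ω, ((fun ω => M ω i j) * fun ω => M ω i k) ω ∂μ := rfl
        _ = (∫ ω, M ω i j ∂μ) * ∫ ω, M ω i k ∂μ := hmul
        _ = _ := by rw [hmean i j, hmean i k]
  have hdot : v ⬝ᵥ y = ∑ j, v j * y j := rfl
  -- counting
  have hcount : ∀ j : Fin n₂,
      ((Finset.univ.filter fun i => u i * v j = 1).card : ℝ) = (n₁ : ℝ) / 2 := by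
    intro j
    have hcard1 : ((Finset.univ.filter fun i => u i = 1).card : ℝ) = (n₁ : ℝ) / 2 := by
      have := hbal
      field_simp
      exact_mod_cast by linarith [hbal]
    rcases hv j with h2 | h2
    · have : (Finset.univ.filter fun i => u i * v j = 1)
          = Finset.univ.filter fun i => u i = 1 := by
        apply Finset.filter_congr
        intro i _
        rw [h2, mul_one]
      rw [this, hcard1]
    · have hfeq : (Finset.univ.filter fun i => u i * v j = 1)
          = Finset.univ.filter fun i => ¬ u i = 1 := by
        apply Finset.filter_congr
        intro i _
        rw [h2]
        rcases hu i with h1 | h1 <;> rw [h1] <;> norm_num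
      rw [hfeq]
      have hadd := Finset.card_filter_add_card_filter_not
        (s := (Finset.univ : Finset (Fin n₁))) (p := fun i => u i = 1)
      have : ((Finset.univ.filter fun i => ¬ u i = 1).card : ℝ)
          = (n₁ : ℝ) - (n₁ : ℝ) / 2 := by
        have h1 : ((Finset.univ.filter fun i => u i = 1).card : ℝ) +
            ((Finset.univ.filter fun i => ¬ u i = 1).card : ℝ) = (n₁ : ℝ) := by
          rw [← Nat.cast_add]
          norm_cast
          simpa using hadd
        linarith [hcard1]
      rw [this]; ring
  have hsumP : ∀ j : Fin n₂, ∑ i, P i j * (1 - P i j) =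
      ((n₁ : ℝ) / 2) * (δ * q * (1 - δ * q) + (2 - δ) * q * (1 - (2 - δ) * q)) := by
    intro j
    have hterm : ∀ i, P i j * (1 - P i j) =
        if u i * v j = 1 then δ * q * (1 - δ * q) else (2 - δ) * q * (1 - (2 - δ) * q) := by
      intro i
      simp only [hPdef]
      split <;> rfl
    rw [Finset.sum_congr rfl fun i _ => hterm i, Finset.sum_ite, Finset.sum_const,
      Finset.sum_const, nsmul_eq_mul, nsmul_eq_mul]
    have h2 : ((Finset.univ.filter fun i => ¬ u i * v j = 1).card : ℝ) = (n₁ : ℝ) / 2 := by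
      have hadd := Finset.card_filter_add_card_filter_not
        (s := (Finset.univ : Finset (Fin n₁))) (p := fun i => u i * v j = 1)
      have h1 : ((Finset.univ.filter fun i => u i * v j = 1).card : ℝ) +
          ((Finset.univ.filter fun i => ¬ u i * v j = 1).card : ℝ) = (n₁ : ℝ) := by
        rw [← Nat.cast_add]
        norm_cast
        simpa using hadd
      linarith [hcount j]
    rw [hcount j, h2]
    ring
  -- expand the square
  have expand : ∀ ω, ∑ i, ((M ω).mulVec y i) ^ 2 =
      ∑ i, ∑ j, ∑ k, (M ω i j * M ω i k) * (y j * y k) := by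
    intro ω
    refine Finset.sum_congr rfl fun i _ => ?_
    rw [show (M ω).mulVec y i = ∑ j, M ω i j * y j from rfl, pow_two, Finset.sum_mul_sum]
    exact Finset.sum_congr rfl fun j _ => Finset.sum_congr rfl fun k _ => by ring
  calc ∫ ω, ∑ i, ((M ω).mulVec y i) ^ 2 ∂μ
      = ∫ ω, ∑ i, ∑ j, ∑ k, (M ω i j * M ω i k) * (y j * y k) ∂μ := by
        exact integral_congr_ae (Filter.Eventually.of_forall expand)
    _ = ∑ i, ∑ j, ∑ k, ∫ ω, (M ω i j * M ω i k) * (y j * y k) ∂μ := by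
        rw [integral_finset_sum _ fun i _ => integrable_finset_sum _ fun j _ =>
          integrable_finset_sum _ fun k _ => ((hprod i j k).1.mul_const _)]
        refine Finset.sum_congr rfl fun i _ => ?_
        rw [integral_finset_sum _ fun j _ =>
          integrable_finset_sum _ fun k _ => ((hprod i j k).1.mul_const _)]
        refine Finset.sum_congr rfl fun j _ => ?_
        exact integral_finset_sum _ fun k _ => ((hprod i j k).1.mul_const _)
    _ = ∑ i, ∑ j, ∑ k,
        ((((δ - 1) * q * u i * v j) * ((δ - 1) * q * u i * v k)) * (y j * y k) +
          (if j = k then P i j * (1 - P i j) * (y j * y k) else 0)) := by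
        refine Finset.sum_congr rfl fun i _ => Finset.sum_congr rfl fun j _ =>
          Finset.sum_congr rfl fun k _ => ?_
        rw [integral_mul_const, (hprod i j k).2]
        split_ifs <;> ring
    _ = ∑ i, (((δ - 1) * q * u i) ^ 2 * (v ⬝ᵥ y) ^ 2 +
          ∑ j, P i j * (1 - P i j) * (y j * y j)) := by
        refine Finset.sum_congr rfl fun i _ => ?_
        rw [Finset.sum_congr rfl fun j (_ : j ∈ Finset.univ) => Finset.sum_add_distrib,
          Finset.sum_add_distrib]
        congr 1
        · have h1 : ∀ j : Fin n₂, ∑ k, (((δ - 1) * q * u i * v j) * ((δ - 1) * q * u i * v k))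
              * (y j * y k) = (((δ - 1) * q * u i * v j) * y j) *
                (((δ - 1) * q * u i) * (v ⬝ᵥ y)) := by
            intro j
            rw [hdot, Finset.mul_sum, Finset.mul_sum]
            exact Finset.sum_congr rfl fun k _ => by ring
          rw [Finset.sum_congr rfl fun j _ => h1 j, ← Finset.sum_mul]
          have h2 : ∑ j, ((δ - 1) * q * u i * v j) * y j =
              ((δ - 1) * q * u i) * (v ⬝ᵥ y) := by
            rw [hdot, Finset.mul_sum]
            exact Finset.sum_congr rfl fun j _ => by ring
          rw [h2]; ring
        · refine Finset.sum_congr rfl fun j _ => ?_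
          simp [Finset.sum_ite_eq]
    _ = _ := by
        rw [Finset.sum_add_distrib, Finset.sum_comm]
        have hui : ∀ i, ((δ - 1) * q * u i) ^ 2 = (δ - 1) ^ 2 * q ^ 2 := by
          intro i
          rcases hu i with h1 | h1 <;> rw [h1] <;> ring
        rw [Finset.sum_congr rfl fun i (_ : i ∈ Finset.univ) =>
          congrArg (· * (v ⬝ᵥ y) ^ 2) (hui i)]
        rw [Finset.sum_const, Finset.card_univ, Fintype.card_fin, nsmul_eq_mul]
        have h3 : ∀ j : Fin n₂, ∑ i, P i j * (1 - P i j) * (y j * y j) =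
            (((n₁ : ℝ) / 2) * (δ * q * (1 - δ * q) + (2 - δ) * q * (1 - (2 - δ) * q)))
              * (y j * y j) := by
          intro j
          rw [← Finset.sum_mul, hsumP j]
        rw [Finset.sum_congr rfl fun j _ => h3 j, ← Finset.mul_sum]
        have h4 : ∑ j, y j * y j = ∑ j, (y j) ^ 2 :=
          Finset.sum_congr rfl fun j _ => (pow_two (y j)).symm
        rw [h4]
        ring
end

section
/- Let M be the centered block random matrix M(n₁,n₂,u,v,δ,q), and suppose n₂ is even and v is balanced (exactly n₂/2 coordinates of v equal +1). Then for every x ∈ ℝ^{n₁}, E[ ‖Mᵀ x‖₂² ] = ‖x‖₂² · ( n₂ q − (n₂ q²/2)·(δ² + (2−δ)²) ) + (δ−1)² · q² · n₂ · (u · x)². -/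
open MeasureTheory ProbabilityTheory Matrix

lemma two_point_moment {Ω : Type*} [MeasurableSpace Ω]
    (μ : Measure Ω) [IsProbabilityMeasure μ] (X : Ω → ℝ) (hX : Measurable X)
    (a b p : ℝ) (hab : a ≠ b) (hp0 : 0 ≤ p) (hp1 : p ≤ 1)
    (ha : μ {ω | X ω = a} = ENNReal.ofReal p)
    (hb : μ {ω | X ω = b} = 1 - ENNReal.ofReal p)
    (f : ℝ → ℝ) :
    Integrable (fun ω => f (X ω)) μ ∧
      ∫ ω, f (X ω) ∂μ = p * f a + (1 - p) * f b := by
  set A : Set Ω := {ω | X ω = a} with hA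
  set B : Set Ω := {ω | X ω = b} with hB
  have hAm : MeasurableSet A := hX (measurableSet_singleton a)
  have hBm : MeasurableSet B := hX (measurableSet_singleton b)
  have hdisj : Disjoint A B := by
    rw [Set.disjoint_left]
    intro ω h1 h2
    exact hab ((h1 : X ω = a).symm.trans h2)
  have hple : ENNReal.ofReal p ≤ 1 := by
    simpa using ENNReal.ofReal_le_ofReal hp1
  have hunion : μ (A ∪ B) = 1 := by
    rw [measure_union hdisj hBm, ha, hb, add_tsub_cancel_of_le hple]
  have hcompl : μ (A ∪ B)ᶜ = 0 := by
    rw [measure_compl (hAm.union hBm) (measure_ne_top μ _), hunion, measure_univ,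
      tsub_self]
  have haemem : ∀ᵐ ω ∂μ, ω ∈ A ∪ B := by
    rw [ae_iff]; exact hcompl
  have hae : (fun ω => f (X ω)) =ᵐ[μ]
      (fun ω => A.indicator (fun _ => f a) ω + B.indicator (fun _ => f b) ω) := by
    filter_upwards [haemem] with ω hω
    rcases hω with h | h
    · have hXa : X ω = a := h
      have hnB : ω ∉ B := fun h2 => hab (hXa.symm.trans h2)
      rw [Set.indicator_of_mem h, Set.indicator_of_notMem hnB, hXa, add_zero]
    · have hXb : X ω = b := h
      have hnA : ω ∉ A := fun h2 => hab ((h2 : X ω = a).symm.trans hXb)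
      rw [Set.indicator_of_mem h, Set.indicator_of_notMem hnA, hXb, zero_add]
  have hint2 : Integrable
      (fun ω => A.indicator (fun _ => f a) ω + B.indicator (fun _ => f b) ω) μ :=
    ((integrable_const (f a)).indicator hAm).add ((integrable_const (f b)).indicator hBm)
  refine ⟨hint2.congr hae.symm, ?_⟩
  rw [integral_congr_ae hae, integral_add ((integrable_const (f a)).indicator hAm)
    ((integrable_const (f b)).indicator hBm), integral_indicator_const _ hAm,
    integral_indicator_const _ hBm, measureReal_def, measureReal_def, ha, hb]
  have h1 : (ENNReal.ofReal p).toReal = p := ENNReal.toReal_ofReal hp0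
  have h2 : ((1 : ENNReal) - ENNReal.ofReal p).toReal = 1 - p := by
    rw [ENNReal.toReal_sub_of_le hple (by simp)]
    simp [h1]
  rw [h1, h2, smul_eq_mul, smul_eq_mul]


/-- `E[‖Mᵀ x‖₂²] = ‖x‖₂² · (n₂q - (n₂q²/2)(δ² + (2-δ)²)) + (δ-1)²·q²·n₂·(u ⬝ x)²`
for the centered block random matrix, when `n₂` is even and `v` is balanced. -/
theorem expectation_norm_sq_MTx {n₁ n₂ : ℕ}
    (u : Fin n₁ → ℝ) (v : Fin n₂ → ℝ) (δ q : ℝ)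
    (hδ : δ ∈ Set.Icc (0:ℝ) 2) (hq : q ∈ Set.Ioo (0:ℝ) 1)
    (hδq : δ * q ≤ 1) (hδq' : (2 - δ) * q ≤ 1)
    (hu : ∀ i, u i = 1 ∨ u i = -1) (hv : ∀ j, v j = 1 ∨ v j = -1)
    (hn₂ : Even n₂)
    (hbal : 2 * (Finset.univ.filter fun j => v j = 1).card = n₂)
    {Ω : Type*} [MeasurableSpace Ω] (μ : Measure Ω) [IsProbabilityMeasure μ]
    (M : Ω → Matrix (Fin n₁) (Fin n₂) ℝ)
    (hM : IsCenteredBlockMatrix u v δ q μ M) :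
    ∀ x : Fin n₁ → ℝ,
      ∫ ω, ∑ j, ((M ω)ᵀ.mulVec x j) ^ 2 ∂μ =
        (∑ i, (x i) ^ 2) * (↑n₂ * q - (↑n₂ * q ^ 2 / 2) * (δ ^ 2 + (2 - δ) ^ 2))
          + (δ - 1) ^ 2 * q ^ 2 * ↑n₂ * (u ⬝ᵥ x) ^ 2 := by
  intro x
  obtain ⟨hq0, hq1⟩ := hq
  obtain ⟨hδ0, hδ2⟩ := hδ
  set P : Fin n₁ → Fin n₂ → ℝ :=
    fun i j => if u i * v j = 1 then δ * q else (2 - δ) * q with hPdef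
  have hP0 : ∀ i j, 0 ≤ P i j := by
    intro i j; dsimp [P]; split <;> nlinarith
  have hP1 : ∀ i j, P i j ≤ 1 := by
    intro i j; dsimp [P]; split <;> assumption
  have hab : (1 - q) ≠ -q := by intro h; linarith [h]
  have hmom : ∀ (i : Fin n₁) (j : Fin n₂) (f : ℝ → ℝ),
      Integrable (fun ω => f (M ω i j)) μ ∧
        ∫ ω, f (M ω i j) ∂μ = P i j * f (1 - q) + (1 - P i j) * f (-q) :=
    fun i j f => two_point_moment μ _ (hM.meas i j) _ _ _ hab (hP0 i j) (hP1 i j)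
      (hM.prob_hi i j) (hM.prob_lo i j) f
  have hsign : ∀ (i : Fin n₁) (j : Fin n₂), u i * v j = 1 ∨ u i * v j = -1 := by
    intro i j
    rcases hu i with h1 | h1 <;> rcases hv j with h2 | h2 <;>
      simp [h1, h2]
  have hInt1 : ∀ i j, Integrable (fun ω => M ω i j) μ :=
    fun i j => (hmom i j (fun y => y)).1
  have hE1 : ∀ i j, ∫ ω, M ω i j ∂μ = (δ - 1) * q * (u i * v j) := by
    intro i j
    rw [(hmom i j (fun y => y)).2]
    rcases hsign i j with h | h <;> rw [h] <;> simp only [P, h, if_pos, if_neg] <;>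
      norm_num <;> ring
  have hE2 : ∀ i j, ∫ ω, (M ω i j) ^ 2 ∂μ =
      (q - q ^ 2) + (δ - 1) * q * (1 - 2 * q) * (u i * v j) := by
    intro i j
    rw [(hmom i j (fun y => y ^ 2)).2]
    rcases hsign i j with h | h <;> rw [h] <;> simp only [P, h, if_pos, if_neg] <;>
      norm_num <;> ring
  have hIntProd : ∀ (j : Fin n₂) (i k : Fin n₁),
      Integrable (fun ω => M ω i j * M ω k j) μ := by
    intro j i k
    by_cases h : i = k
    · subst h
      have := (hmom i j (fun y => y ^ 2)).1
      simpa [pow_two] using this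
    · have hind : IndepFun (fun ω => M ω i j) (fun ω => M ω k j) μ :=
        hM.indep.indepFun
          (show ((i, j) : Fin n₁ × Fin n₂) ≠ (k, j) from
            fun hc => h (congrArg Prod.fst hc))
      exact hind.integrable_mul (hInt1 i j) (hInt1 k j)
  have hIProd : ∀ (j : Fin n₂) (i k : Fin n₁),
      ∫ ω, M ω i j * M ω k j ∂μ =
        (δ - 1) ^ 2 * q ^ 2 * (u i * u k) +
          (if i = k then (q - q ^ 2) + (δ - 1) * q * (1 - 2 * q) * (u i * v j)
            - (δ - 1) ^ 2 * q ^ 2 else 0) := by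
    intro j i k
    by_cases h : i = k
    · subst h
      rw [if_pos rfl]
      have h2 : ∫ ω, M ω i j * M ω i j ∂μ = ∫ ω, (M ω i j) ^ 2 ∂μ := by
        congr 1; funext ω; ring
      rw [h2, hE2 i j]
      rcases hu i with h1 | h1 <;> rw [h1] <;> ring
    · have hind : IndepFun (fun ω => M ω i j) (fun ω => M ω k j) μ :=
        hM.indep.indepFun
          (show ((i, j) : Fin n₁ × Fin n₂) ≠ (k, j) from
            fun hc => h (congrArg Prod.fst hc))
      rw [if_neg h, add_zero]
      have := IndepFun.integral_fun_mul_eq_mul_integral hind (hInt1 i j).aestronglyMeasurable (hInt1 k j).aestronglyMeasurable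
      have h3 : ∫ ω, M ω i j * M ω k j ∂μ =
          (∫ ω, M ω i j ∂μ) * ∫ ω, M ω k j ∂μ := this
      rw [h3, hE1, hE1]
      rcases hv j with h2 | h2 <;> rw [h2] <;> ring
  -- rewrite the quadratic form
  have hfun : ∀ (j : Fin n₂), (fun ω => ((M ω)ᵀ.mulVec x j) ^ 2) =
      fun ω => ∑ i, ∑ k, x i * x k * (M ω i j * M ω k j) := by
    intro j
    funext ω
    have : (M ω)ᵀ.mulVec x j = ∑ i, M ω i j * x i := by
      simp [Matrix.mulVec, dotProduct, Matrix.transpose_apply]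
    rw [this, sq, Finset.sum_mul_sum]
    exact Finset.sum_congr rfl fun i _ => Finset.sum_congr rfl fun k _ => by ring
  have hIntj : ∀ j, Integrable (fun ω => ((M ω)ᵀ.mulVec x j) ^ 2) μ := by
    intro j
    rw [hfun j]
    exact integrable_finset_sum _ fun i _ =>
      integrable_finset_sum _ fun k _ => ((hIntProd j i k).const_mul _)
  have hEj : ∀ j, ∫ ω, ((M ω)ᵀ.mulVec x j) ^ 2 ∂μ =
      ∑ i, ∑ k, x i * x k * ∫ ω, M ω i j * M ω k j ∂μ := by
    intro j
    rw [hfun j, integral_finset_sum _ (fun i _ =>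
      integrable_finset_sum _ fun k _ => ((hIntProd j i k).const_mul _))]
    refine Finset.sum_congr rfl fun i _ => ?_
    rw [integral_finset_sum _ (fun k _ => ((hIntProd j i k).const_mul _))]
    exact Finset.sum_congr rfl fun k _ => integral_const_mul _ _
  have hvsum : ∑ j, v j = 0 := by
    have h1 := Finset.sum_filter_add_sum_filter_not Finset.univ (fun j => v j = 1) v
    have h2 : ∑ j ∈ Finset.univ.filter (fun j => v j = 1), v j =
        ((Finset.univ.filter fun j => v j = 1).card : ℝ) := by
      rw [Finset.sum_congr rfl (fun j hj => (Finset.mem_filter.mp hj).2)]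
      simp
    have h3 : ∑ j ∈ Finset.univ.filter (fun j => ¬ v j = 1), v j =
        -((Finset.univ.filter fun j => ¬ v j = 1).card : ℝ) := by
      rw [Finset.sum_congr rfl (fun j hj => (hv j).resolve_left
        (Finset.mem_filter.mp hj).2)]
      simp
    have h4 := Finset.card_filter_add_card_filter_not
      (s := (Finset.univ : Finset (Fin n₂))) (fun j => v j = 1)
    rw [Finset.card_univ, Fintype.card_fin] at h4
    rw [h2, h3] at h1
    rw [← h1]
    have h5 : ((Finset.univ.filter fun j => ¬ v j = 1).card : ℝ) =
        (n₂ : ℝ) - ((Finset.univ.filter fun j => v j = 1).card : ℝ) := by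
      have := h4
      push_cast [← this]
      ring
    rw [h5]
    have h6 : (2 : ℝ) * ((Finset.univ.filter fun j => v j = 1).card : ℝ) = (n₂ : ℝ) := by
      exact_mod_cast congrArg (Nat.cast : ℕ → ℝ) hbal
    linarith
  have husq : ∀ i, u i * u i = 1 := by
    intro i; rcases hu i with h | h <;> rw [h] <;> norm_num
  -- main chain
  rw [integral_finset_sum _ (fun j _ => hIntj j)]
  have hperj : ∀ j, ∫ ω, ((M ω)ᵀ.mulVec x j) ^ 2 ∂μ =
      (δ - 1) ^ 2 * q ^ 2 * (∑ i, u i * x i) ^ 2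
        + ((q - q ^ 2) - (δ - 1) ^ 2 * q ^ 2) * (∑ i, (x i) ^ 2)
        + (δ - 1) * q * (1 - 2 * q) * v j * (∑ i, (x i) ^ 2 * u i) := by
    intro j
    rw [hEj j]
    have hsplit : ∀ i k : Fin n₁, x i * x k * ∫ ω, M ω i j * M ω k j ∂μ =
        (δ - 1) ^ 2 * q ^ 2 * ((u i * x i) * (u k * x k)) +
          (if i = k then x i * x k * ((q - q ^ 2)
            + (δ - 1) * q * (1 - 2 * q) * (u i * v j)
            - (δ - 1) ^ 2 * q ^ 2) else 0) := by
      intro i k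
      rw [hIProd j i k]
      by_cases h : i = k
      · subst h; rw [if_pos rfl, if_pos rfl]
        have := husq i
        nlinarith [husq i]
      · rw [if_neg h, if_neg h]; ring
    calc ∑ i, ∑ k, x i * x k * ∫ ω, M ω i j * M ω k j ∂μ
        = ∑ i, ∑ k, ((δ - 1) ^ 2 * q ^ 2 * ((u i * x i) * (u k * x k)) +
          (if i = k then x i * x k * ((q - q ^ 2)
            + (δ - 1) * q * (1 - 2 * q) * (u i * v j)
            - (δ - 1) ^ 2 * q ^ 2) else 0)) := by
          exact Finset.sum_congr rfl fun i _ => Finset.sum_congr rfl fun k _ =>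
            hsplit i k
      _ = (∑ i, ∑ k, (δ - 1) ^ 2 * q ^ 2 * ((u i * x i) * (u k * x k))) +
          ∑ i, (x i * x i * ((q - q ^ 2)
            + (δ - 1) * q * (1 - 2 * q) * (u i * v j)
            - (δ - 1) ^ 2 * q ^ 2)) := by
          rw [← Finset.sum_add_distrib]
          refine Finset.sum_congr rfl fun i _ => ?_
          rw [Finset.sum_add_distrib]
          congr 1
          simp [Finset.sum_ite_eq]
      _ = (δ - 1) ^ 2 * q ^ 2 * (∑ i, u i * x i) ^ 2
        + ((q - q ^ 2) - (δ - 1) ^ 2 * q ^ 2) * (∑ i, (x i) ^ 2)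
        + (δ - 1) * q * (1 - 2 * q) * v j * (∑ i, (x i) ^ 2 * u i) := by
          have e1 : ∑ i, ∑ k, (δ - 1) ^ 2 * q ^ 2 * ((u i * x i) * (u k * x k)) =
              (δ - 1) ^ 2 * q ^ 2 * (∑ i, u i * x i) ^ 2 := by
            have hsq : (∑ i, u i * x i) ^ 2 =
                ∑ i, ∑ k, (u i * x i) * (u k * x k) := by
              rw [pow_two, Finset.sum_mul_sum]
            rw [hsq, Finset.mul_sum]
            exact Finset.sum_congr rfl fun i _ => by rw [Finset.mul_sum]
          rw [e1]
          have e2 : ∑ i, (x i * x i * ((q - q ^ 2)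
              + (δ - 1) * q * (1 - 2 * q) * (u i * v j)
              - (δ - 1) ^ 2 * q ^ 2)) =
              ((q - q ^ 2) - (δ - 1) ^ 2 * q ^ 2) * (∑ i, (x i) ^ 2)
              + (δ - 1) * q * (1 - 2 * q) * v j * (∑ i, (x i) ^ 2 * u i) := by
            rw [Finset.mul_sum, Finset.mul_sum, ← Finset.sum_add_distrib]
            exact Finset.sum_congr rfl fun i _ => by ring
          rw [e2]; ring
  rw [Finset.sum_congr rfl fun j _ => hperj j]
  rw [Finset.sum_add_distrib, Finset.sum_add_distrib, Finset.sum_const,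
    Finset.sum_const, Finset.card_univ, Fintype.card_fin]
  have e3 : ∑ j : Fin n₂, (δ - 1) * q * (1 - 2 * q) * v j * (∑ i, (x i) ^ 2 * u i)
      = 0 := by
    rw [Finset.sum_congr rfl (fun j (_ : j ∈ Finset.univ) =>
      show (δ - 1) * q * (1 - 2 * q) * v j * (∑ i, (x i) ^ 2 * u i) =
        ((δ - 1) * q * (1 - 2 * q) * (∑ i, (x i) ^ 2 * u i)) * v j from by ring),
      ← Finset.mul_sum, hvsum, mul_zero]
  rw [e3]
  have e4 : u ⬝ᵥ x = ∑ i, u i * x i := rfl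
  rw [e4]
  simp only [nsmul_eq_mul]
  ring
end

section
/- There exists an absolute constant C > 0 with the following property. Let M be the centered block random matrix M(n₁,n₂,u,v,δ,q) and suppose n₁ · q ≤ 1. Then for every x ∈ ℝ^{n₁}, Var[ ‖Mᵀ x‖₂² ] ≤ C · n₂ · n₁ · q · ‖x‖∞⁴, where ‖x‖∞ is the maximum absolute value of a coordinate of x. -/
open MeasureTheory ProbabilityTheory Matrix

section Aux
variable {Ω : Type*} [MeasurableSpace Ω] {μ : Measure Ω} [IsProbabilityMeasure μ]

/-- An a.e.-bounded a.e.-strongly-measurable function is integrable on a probability space. -/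
lemma integrable_of_ae_bound' {f : Ω → ℝ} (hf : AEStronglyMeasurable f μ) {C : ℝ}
    (h : ∀ᵐ ω ∂μ, |f ω| ≤ C) : Integrable f μ :=
  (memLp_top_of_bound hf C (by simpa [Real.norm_eq_abs] using h)).integrable le_top

lemma stepA {ι : Type*} (Z : ι → Ω → ℝ) (s : Finset ι)
    (hmeas : ∀ i, Measurable (Z i))
    (hindep : iIndepFun Z μ)
    (hbnd : ∀ i ∈ s, ∀ᵐ ω ∂μ, Z i ω ∈ Set.Icc (0:ℝ) 1) (k : ℕ) :
    ∫ ω, (∑ i ∈ s, Z i ω) ^ (k+1) ∂μ ≤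
      (∑ i ∈ s, ∫ ω, Z i ω ∂μ) * ∫ ω, ((∑ i ∈ s, Z i ω) + 1) ^ k ∂μ := by
  classical
  have hae : ∀ᵐ ω ∂μ, ∀ i ∈ s, Z i ω ∈ Set.Icc (0:ℝ) 1 :=
    (ae_ball_iff s.countable_toSet).2 hbnd
  have hsum : ∀ ω, (∀ i ∈ s, Z i ω ∈ Set.Icc (0:ℝ) 1) → ∀ t ⊆ s,
      (0 ≤ ∑ i ∈ t, Z i ω ∧ ∑ i ∈ t, Z i ω ≤ t.card) := by
    intro ω hω t hts
    constructor
    · exact Finset.sum_nonneg fun i hi => (hω i (hts hi)).1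
    · refine le_trans (Finset.sum_le_card_nsmul t _ 1 fun i hi => (hω i (hts hi)).2) (by simp)
  -- measurability of partial sums
  have hmeasT : ∀ t : Finset ι, Measurable (fun ω => ∑ i ∈ t, Z i ω) := fun t =>
    Finset.measurable_sum _ (fun i _ => hmeas i)
  -- integrability of (sum over t ⊆ s + c)^j
  have hint : ∀ (t : Finset ι), t ⊆ s → ∀ (c : ℝ) (j : ℕ),
      Integrable (fun ω => ((∑ i ∈ t, Z i ω) + c) ^ j) μ := by
    intro t hts c j
    refine integrable_of_ae_bound' (((hmeasT t).add_const c).pow_const j).aestronglyMeasurable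
      (C := ((t.card : ℝ) + |c|) ^ j) ?_
    filter_upwards [hae] with ω hω
    rw [abs_pow]
    refine pow_le_pow_left₀ (abs_nonneg _) ?_ j
    refine (abs_add_le _ _).trans (add_le_add ?_ le_rfl)
    rw [abs_le]
    exact ⟨le_trans (neg_nonpos.2 (Nat.cast_nonneg _)) (hsum ω hω t hts).1, (hsum ω hω t hts).2⟩
  have hintZ : ∀ i ∈ s, Integrable (Z i) μ := by
    intro i hi
    refine integrable_of_ae_bound' (hmeas i).aestronglyMeasurable (C := 1) ?_
    filter_upwards [hbnd i hi] with ω hω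
    rw [abs_le]; exact ⟨by linarith [hω.1], hω.2⟩
  -- integrability of products
  have hintZT : ∀ i ∈ s, ∀ (t : Finset ι), t ⊆ s → ∀ c : ℝ,
      Integrable (fun ω => Z i ω * ((∑ i' ∈ t, Z i' ω) + c) ^ k) μ := by
    intro i hi t hts c
    refine integrable_of_ae_bound'
      (((hmeas i).mul (((hmeasT t).add_const c).pow_const k)).aestronglyMeasurable)
      (C := 1 * ((t.card : ℝ) + |c|) ^ k) ?_
    filter_upwards [hae] with ω hω
    rw [abs_mul]
    refine mul_le_mul ?_ ?_ (abs_nonneg _) zero_le_one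
    · rw [abs_le]; exact ⟨by linarith [(hω i hi).1], (hω i hi).2⟩
    · rw [abs_pow]
      refine pow_le_pow_left₀ (abs_nonneg _) ?_ k
      refine (abs_add_le _ _).trans (add_le_add ?_ le_rfl)
      rw [abs_le]
      exact ⟨le_trans (neg_nonpos.2 (Nat.cast_nonneg _)) (hsum ω hω t hts).1, (hsum ω hω t hts).2⟩
  have hintZT0 : ∀ i ∈ s, Integrable (fun ω => Z i ω * (∑ i' ∈ s, Z i' ω) ^ k) μ := by
    intro i hi; simpa using hintZT i hi s le_rfl 0
  have h1 : ∫ ω, (∑ i ∈ s, Z i ω) ^ (k+1) ∂μ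
      = ∑ i ∈ s, ∫ ω, Z i ω * (∑ i' ∈ s, Z i' ω) ^ k ∂μ := by
    rw [← integral_finset_sum s hintZT0]
    congr 1
    funext ω
    rw [← Finset.sum_mul, pow_succ']
  rw [h1]
  -- bound each term
  have key : ∀ i ∈ s, ∫ ω, Z i ω * (∑ i' ∈ s, Z i' ω) ^ k ∂μ ≤
      (∫ ω, Z i ω ∂μ) * ∫ ω, ((∑ i' ∈ s, Z i' ω) + 1) ^ k ∂μ := by
    intro i hi
    have hstep1 : ∫ ω, Z i ω * (∑ i' ∈ s, Z i' ω) ^ k ∂μ ≤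
        ∫ ω, Z i ω * ((∑ i' ∈ s.erase i, Z i' ω) + 1) ^ k ∂μ := by
      refine integral_mono_ae (hintZT0 i hi)
        (hintZT i hi (s.erase i) (Finset.erase_subset _ _) 1) ?_
      filter_upwards [hae] with ω hω
      refine mul_le_mul_of_nonneg_left ?_ (hω i hi).1
      refine pow_le_pow_left₀ (hsum ω hω s le_rfl).1 ?_ k
      rw [← Finset.add_sum_erase s _ hi]
      linarith [(hω i hi).2]
    have hindep2 : IndepFun (Z i)
        (fun ω => ((∑ i' ∈ s.erase i, Z i' ω) + 1) ^ k) μ := by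
      have h0 : IndepFun (∑ i' ∈ s.erase i, Z i') (Z i) μ :=
        hindep.indepFun_finsetSum_of_notMem hmeas (Finset.notMem_erase i s)
      have := (h0.symm.comp measurable_id
        ((measurable_id.add_const (1:ℝ)).pow_const k))
      convert this using 1
      funext ω
      simp [Finset.sum_apply]
      funext ω
      simp [Finset.sum_apply]
    have hstep2 : ∫ ω, Z i ω * ((∑ i' ∈ s.erase i, Z i' ω) + 1) ^ k ∂μ =
        (∫ ω, Z i ω ∂μ) * ∫ ω, ((∑ i' ∈ s.erase i, Z i' ω) + 1) ^ k ∂μ :=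
      hindep2.integral_fun_mul_eq_mul_integral (hmeas i).aestronglyMeasurable
        (((hmeasT _).add_const 1).pow_const k).aestronglyMeasurable
    have hZnn : 0 ≤ ∫ ω, Z i ω ∂μ := by
      refine integral_nonneg_of_ae ?_
      filter_upwards [hbnd i hi] with ω hω using hω.1
    have hstep3 : ∫ ω, ((∑ i' ∈ s.erase i, Z i' ω) + 1) ^ k ∂μ ≤
        ∫ ω, ((∑ i' ∈ s, Z i' ω) + 1) ^ k ∂μ := by
      refine integral_mono_ae (hint (s.erase i) (Finset.erase_subset _ _) 1 k)
        (hint s le_rfl 1 k) ?_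
      filter_upwards [hae] with ω hω
      refine pow_le_pow_left₀ (by linarith [(hsum ω hω (s.erase i) (Finset.erase_subset _ _)).1]) ?_ k
      have : ∑ i' ∈ s.erase i, Z i' ω ≤ ∑ i' ∈ s, Z i' ω := by
        refine Finset.sum_le_sum_of_subset_of_nonneg (Finset.erase_subset _ _) ?_
        intro j hj _; exact (hω j hj).1
      linarith
    calc ∫ ω, Z i ω * (∑ i' ∈ s, Z i' ω) ^ k ∂μ
        ≤ ∫ ω, Z i ω * ((∑ i' ∈ s.erase i, Z i' ω) + 1) ^ k ∂μ := hstep1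
      _ = (∫ ω, Z i ω ∂μ) * ∫ ω, ((∑ i' ∈ s.erase i, Z i' ω) + 1) ^ k ∂μ := hstep2
      _ ≤ (∫ ω, Z i ω ∂μ) * ∫ ω, ((∑ i' ∈ s, Z i' ω) + 1) ^ k ∂μ :=
          mul_le_mul_of_nonneg_left hstep3 hZnn
  calc ∑ i ∈ s, ∫ ω, Z i ω * (∑ i' ∈ s, Z i' ω) ^ k ∂μ
      ≤ ∑ i ∈ s, (∫ ω, Z i ω ∂μ) * ∫ ω, ((∑ i' ∈ s, Z i' ω) + 1) ^ k ∂μ :=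
        Finset.sum_le_sum key
    _ = (∑ i ∈ s, ∫ ω, Z i ω ∂μ) * ∫ ω, ((∑ i' ∈ s, Z i' ω) + 1) ^ k ∂μ := by
        rw [Finset.sum_mul]
end Aux

section Aux2
variable {Ω : Type*} [MeasurableSpace Ω] {μ : Measure Ω} [IsProbabilityMeasure μ]

lemma intAux {ι : Type*} (Z : ι → Ω → ℝ) (s : Finset ι)
    (hmeas : ∀ i, Measurable (Z i))
    (hbnd : ∀ i ∈ s, ∀ᵐ ω ∂μ, Z i ω ∈ Set.Icc (0:ℝ) 1) (c : ℝ) (j : ℕ) :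
    Integrable (fun ω => ((∑ i ∈ s, Z i ω) + c) ^ j) μ := by
  classical
  have hae : ∀ᵐ ω ∂μ, ∀ i ∈ s, Z i ω ∈ Set.Icc (0:ℝ) 1 :=
    (ae_ball_iff s.countable_toSet).2 hbnd
  refine integrable_of_ae_bound'
    (((Finset.measurable_sum s (fun i _ => hmeas i)).add_const c).pow_const j).aestronglyMeasurable
    (C := ((s.card : ℝ) + |c|) ^ j) ?_
  filter_upwards [hae] with ω hω
  rw [abs_pow]
  refine pow_le_pow_left₀ (abs_nonneg _) ?_ j
  refine (abs_add_le _ _).trans (add_le_add ?_ le_rfl)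
  rw [abs_le]
  constructor
  · exact le_trans (neg_nonpos.2 (Nat.cast_nonneg _))
      (Finset.sum_nonneg fun i hi => (hω i hi).1)
  · exact le_trans (Finset.sum_le_card_nsmul s _ 1 fun i hi => (hω i hi).2) (by simp)

lemma moment4 {ι : Type*} (Z : ι → Ω → ℝ) (s : Finset ι)
    (hmeas : ∀ i, Measurable (Z i))
    (hindep : iIndepFun Z μ)
    (hbnd : ∀ i ∈ s, ∀ᵐ ω ∂μ, Z i ω ∈ Set.Icc (0:ℝ) 1)
    (hm3 : (∑ i ∈ s, ∫ ω, Z i ω ∂μ) ≤ 3) :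
    ∫ ω, (∑ i ∈ s, Z i ω) ^ 4 ∂μ ≤ 1256 * ∑ i ∈ s, ∫ ω, Z i ω ∂μ := by
  classical
  have hae : ∀ᵐ ω ∂μ, ∀ i ∈ s, Z i ω ∈ Set.Icc (0:ℝ) 1 :=
    (ae_ball_iff s.countable_toSet).2 hbnd
  set m := ∑ i ∈ s, ∫ ω, Z i ω ∂μ with hm
  have hintZ : ∀ i ∈ s, Integrable (Z i) μ := by
    intro i hi
    refine integrable_of_ae_bound' (hmeas i).aestronglyMeasurable (C := 1) ?_
    filter_upwards [hbnd i hi] with ω hω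
    rw [abs_le]; exact ⟨by linarith [hω.1], hω.2⟩
  have hm0 : 0 ≤ m := by
    refine Finset.sum_nonneg fun i hi => integral_nonneg_of_ae ?_
    filter_upwards [hbnd i hi] with ω hω using hω.1
  have hintT : Integrable (fun ω => ∑ i ∈ s, Z i ω) μ := by
    simpa using intAux Z s hmeas hbnd 0 1
  have hintTk : ∀ j : ℕ, Integrable (fun ω => (∑ i ∈ s, Z i ω) ^ j) μ := by
    intro j; simpa using intAux Z s hmeas hbnd 0 j
  have hTk_nn : ∀ j : ℕ, 0 ≤ ∫ ω, (∑ i ∈ s, Z i ω) ^ j ∂μ := by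
    intro j
    refine integral_nonneg_of_ae ?_
    filter_upwards [hae] with ω hω
    exact pow_nonneg (Finset.sum_nonneg fun i hi => (hω i hi).1) j
  have hintT1 : ∀ j : ℕ, Integrable (fun ω => ((∑ i ∈ s, Z i ω) + 1) ^ j) μ :=
    fun j => intAux Z s hmeas hbnd 1 j
  have hIT : ∫ ω, ∑ i ∈ s, Z i ω ∂μ = m := integral_finset_sum s hintZ
  -- (T+1)^1
  have hE1 : ∫ ω, ((∑ i ∈ s, Z i ω) + 1) ^ 1 ∂μ = m + 1 := by
    simp only [pow_one]
    rw [integral_add hintT (integrable_const 1), hIT, integral_const]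
    simp
  -- T^2
  have hT2 : ∫ ω, (∑ i ∈ s, Z i ω) ^ 2 ∂μ ≤ m * (m + 1) := by
    have := stepA Z s hmeas hindep hbnd 1
    rw [hE1] at this
    exact this
  -- (T+1)^2 ≤ 4T^2+4
  have hE2 : ∫ ω, ((∑ i ∈ s, Z i ω) + 1) ^ 2 ∂μ ≤
      4 * ∫ ω, (∑ i ∈ s, Z i ω) ^ 2 ∂μ + 4 := by
    have heq : ∫ ω, (4 * (∑ i ∈ s, Z i ω) ^ 2 + 4) ∂μ =
        4 * ∫ ω, (∑ i ∈ s, Z i ω) ^ 2 ∂μ + 4 := by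
      rw [integral_add ((hintTk 2).const_mul 4) (integrable_const 4),
        integral_const_mul, integral_const]
      simp
    refine le_trans (integral_mono_ae (hintT1 2)
      (((hintTk 2).const_mul 4).add (integrable_const 4)) ?_) heq.le
    filter_upwards [hae] with ω hω
    have h0 : 0 ≤ ∑ i ∈ s, Z i ω := Finset.sum_nonneg fun i hi => (hω i hi).1
    simp only [Pi.add_apply]
    nlinarith [sq_nonneg ((∑ i ∈ s, Z i ω) - 1)]
  -- T^3
  have hT3 : ∫ ω, (∑ i ∈ s, Z i ω) ^ 3 ∂μ ≤ 52 * m := by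
    have h := stepA Z s hmeas hindep hbnd 2
    have h2 : ∫ ω, ((∑ i ∈ s, Z i ω) + 1) ^ 2 ∂μ ≤ 16 * m + 4 := by
      nlinarith [hE2, hT2]
    have hE2nn : (0:ℝ) ≤ ∫ ω, ((∑ i ∈ s, Z i ω) + 1) ^ 2 ∂μ := by
      refine integral_nonneg_of_ae ?_
      filter_upwards [hae] with ω hω
      positivity
    nlinarith [h]
  -- (T+1)^3 ≤ 8T^3+8
  have hE3 : ∫ ω, ((∑ i ∈ s, Z i ω) + 1) ^ 3 ∂μ ≤
      8 * ∫ ω, (∑ i ∈ s, Z i ω) ^ 3 ∂μ + 8 := by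
    have heq : ∫ ω, (8 * (∑ i ∈ s, Z i ω) ^ 3 + 8) ∂μ =
        8 * ∫ ω, (∑ i ∈ s, Z i ω) ^ 3 ∂μ + 8 := by
      rw [integral_add ((hintTk 3).const_mul 8) (integrable_const 8),
        integral_const_mul, integral_const]
      simp
    refine le_trans (integral_mono_ae (hintT1 3)
      (((hintTk 3).const_mul 8).add (integrable_const 8)) ?_) heq.le
    filter_upwards [hae] with ω hω
    have h0 : 0 ≤ ∑ i ∈ s, Z i ω := Finset.sum_nonneg fun i hi => (hω i hi).1
    simp only [Pi.add_apply]
    nlinarith [sq_nonneg ((∑ i ∈ s, Z i ω) - 1), mul_nonneg h0 (sq_nonneg ((∑ i ∈ s, Z i ω) - 1))]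
  -- T^4
  have h := stepA Z s hmeas hindep hbnd 3
  have hE3b : ∫ ω, ((∑ i ∈ s, Z i ω) + 1) ^ 3 ∂μ ≤ 416 * m + 8 := by nlinarith [hE3, hT3]
  have hE3nn : (0:ℝ) ≤ ∫ ω, ((∑ i ∈ s, Z i ω) + 1) ^ 3 ∂μ := by
    refine integral_nonneg_of_ae ?_
    filter_upwards [hae] with ω hω
    have h0 : 0 ≤ ∑ i ∈ s, Z i ω := Finset.sum_nonneg fun i hi => (hω i hi).1
    positivity
  nlinarith [h]
end Aux2

/-- There is an absolute constant `C > 0` such that, for the centered block random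
matrix with `n₁·q ≤ 1`, `Var[‖Mᵀ x‖₂²] ≤ C · n₂ · n₁ · q · ‖x‖∞⁴` for every `x`
(here `‖x‖` is the sup norm on `Fin n₁ → ℝ`). -/
theorem variance_norm_sq_MTx : ∃ C : ℝ, 0 < C ∧
    ∀ (n₁ n₂ : ℕ) (u : Fin n₁ → ℝ) (v : Fin n₂ → ℝ) (δ q : ℝ),
    δ ∈ Set.Icc (0:ℝ) 2 → q ∈ Set.Ioo (0:ℝ) 1 →
    δ * q ≤ 1 → (2 - δ) * q ≤ 1 →
    (∀ i, u i = 1 ∨ u i = -1) → (∀ j, v j = 1 ∨ v j = -1) →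
    (↑n₁ * q ≤ 1) →
    ∀ {Ω : Type} [inst : MeasurableSpace Ω] (μ : Measure Ω), IsProbabilityMeasure μ →
    ∀ M : Ω → Matrix (Fin n₁) (Fin n₂) ℝ, IsCenteredBlockMatrix u v δ q μ M →
    ∀ x : Fin n₁ → ℝ,
      ProbabilityTheory.variance (fun ω => ∑ j, ((M ω)ᵀ.mulVec x j) ^ 2) μ ≤
        C * ↑n₂ * ↑n₁ * q * ‖x‖ ^ 4 := by
  classical
  refine ⟨3768, by norm_num, ?_⟩
  intro n₁ n₂ u v δ q hδ hq hδq h2δq hu hv hn₁q Ω inst μ hμ M hM x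
  obtain ⟨hq0, hq1⟩ := hq
  obtain ⟨hδ0, hδ2⟩ := hδ
  set P : Fin n₁ → Fin n₂ → ℝ :=
    fun i j => if u i * v j = 1 then δ * q else (2 - δ) * q with hP
  have hP0 : ∀ i j, 0 ≤ P i j := by
    intro i j; dsimp [P]; split <;> nlinarith
  have hP1 : ∀ i j, P i j ≤ 1 := by
    intro i j; dsimp [P]; split <;> assumption
  have hP2q : ∀ i j, P i j ≤ 2 * q := by
    intro i j; dsimp [P]; split <;> nlinarith
  -- measurable sets where entry takes its two values
  have hAmeas : ∀ i j, MeasurableSet {ω | M ω i j = 1 - q} :=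
    fun i j => hM.meas i j (measurableSet_singleton (1 - q))
  have hBmeas : ∀ i j, MeasurableSet {ω | M ω i j = -q} :=
    fun i j => hM.meas i j (measurableSet_singleton (-q))
  -- a.e. two-valued
  have hval : ∀ i j, ∀ᵐ ω ∂μ, M ω i j = 1 - q ∨ M ω i j = -q := by
    intro i j
    have hdisj : Disjoint {ω | M ω i j = 1 - q} {ω | M ω i j = -q} := by
      rw [Set.disjoint_left]
      intro ω h1 h2
      simp only [Set.mem_setOf_eq] at h1 h2
      rw [h1] at h2
      linarith
    have hunion : μ ({ω | M ω i j = 1 - q} ∪ {ω | M ω i j = -q}) = 1 := by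
      rw [measure_union hdisj (hBmeas i j), hM.prob_hi i j, hM.prob_lo i j,
        add_tsub_cancel_of_le]
      rw [← ENNReal.ofReal_one]
      exact ENNReal.ofReal_le_ofReal (hP1 i j)
    have hcompl : μ ({ω | M ω i j = 1 - q} ∪ {ω | M ω i j = -q})ᶜ = 0 := by
      rw [measure_compl ((hAmeas i j).union (hBmeas i j)) (measure_ne_top μ _), hunion,
        measure_univ, tsub_self]
    rw [ae_iff]
    have hset : {a | ¬(M a i j = 1 - q ∨ M a i j = -q)} =
        ({ω | M ω i j = 1 - q} ∪ {ω | M ω i j = -q})ᶜ := by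
      ext ω; simp [not_or]
    rw [hset]
    exact hcompl
  -- a.e. absolute value in [0,1]
  have habs : ∀ i j, ∀ᵐ ω ∂μ, |M ω i j| ∈ Set.Icc (0:ℝ) 1 := by
    intro i j
    filter_upwards [hval i j] with ω hω
    rcases hω with h | h <;> rw [h] <;>
      constructor <;> [exact abs_nonneg _; rw [abs_of_nonneg (by linarith)];
        exact abs_nonneg _; rw [abs_of_nonpos (by linarith)]] <;> linarith
  -- expectation of |entry| is at most 3q
  have hEabs : ∀ i j, ∫ ω, |M ω i j| ∂μ ≤ 3 * q := by
    intro i j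
    have hμA : (μ {ω | M ω i j = 1 - q}).toReal = P i j := by
      rw [hM.prob_hi i j, ENNReal.toReal_ofReal (hP0 i j)]
    have hintL : Integrable (fun ω => |M ω i j|) μ := by
      refine (memLp_top_of_bound (hM.meas i j).abs.aestronglyMeasurable 1 ?_).integrable le_top
      filter_upwards [habs i j] with ω hω
      simpa [Real.norm_eq_abs, abs_abs] using hω.2
    have hintR : Integrable
        (fun ω => q + ({ω | M ω i j = 1 - q}).indicator (fun _ => (1:ℝ)) ω) μ :=
      (integrable_const q).add ((integrable_const (1:ℝ)).indicator (hAmeas i j))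
    have hmono : ∫ ω, |M ω i j| ∂μ ≤
        ∫ ω, (q + ({ω | M ω i j = 1 - q}).indicator (fun _ => (1:ℝ)) ω) ∂μ := by
      refine integral_mono_ae hintL hintR ?_
      filter_upwards [hval i j] with ω hω
      rcases hω with h | h
      · have hmem : ω ∈ {ω | M ω i j = 1 - q} := h
        rw [h, Set.indicator_of_mem hmem, abs_of_nonneg (by linarith)]
        linarith
      · rw [h, abs_of_nonpos (by linarith)]
        have : (0:ℝ) ≤ ({ω | M ω i j = 1 - q}).indicator (fun _ => (1:ℝ)) ω :=
          Set.indicator_nonneg (fun _ _ => zero_le_one) ω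
        linarith
    have hcalc : ∫ ω, (q + ({ω | M ω i j = 1 - q}).indicator (fun _ => (1:ℝ)) ω) ∂μ
        = q + P i j := by
      rw [integral_add (integrable_const q) ((integrable_const (1:ℝ)).indicator (hAmeas i j)),
        integral_const, integral_indicator_const (1:ℝ) (hAmeas i j), measureReal_def, measureReal_def, hμA]
      simp
    have := hP2q i j
    linarith [hmono.trans hcalc.le]
  -- family of absolute values of entries
  set Zab : Fin n₁ × Fin n₂ → Ω → ℝ := fun p ω => |M ω p.1 p.2| with hZab
  have hZmeas : ∀ p, Measurable (Zab p) := fun p => (hM.meas p.1 p.2).abs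
  have hZindep : iIndepFun
      Zab μ :=
    hM.indep.comp (fun _ => fun t : ℝ => |t|) (fun _ => measurable_abs)
  -- fourth moment bound for each column
  have hcol : ∀ j : Fin n₂, ∫ ω, (∑ i, |M ω i j|) ^ 4 ∂μ ≤ 3768 * n₁ * q := by
    intro j
    set sj : Finset (Fin n₁ × Fin n₂) := Finset.univ ×ˢ ({j} : Finset (Fin n₂)) with hsj
    have hsum_eq : ∀ ω, ∑ p ∈ sj, Zab p ω = ∑ i, |M ω i j| := by
      intro ω
      rw [hsj, Finset.sum_product]
      simp [Zab]
    have hm_eq : ∑ p ∈ sj, ∫ ω, Zab p ω ∂μ = ∑ i, ∫ ω, |M ω i j| ∂μ := by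
      rw [hsj, Finset.sum_product]
      simp [Zab]
    have hm_le : ∑ p ∈ sj, ∫ ω, Zab p ω ∂μ ≤ (n₁ : ℝ) * (3 * q) := by
      rw [hm_eq]
      refine le_trans (Finset.sum_le_sum fun i _ => hEabs i j) ?_
      rw [Finset.sum_const, Finset.card_univ, Fintype.card_fin, nsmul_eq_mul]
    have hm3 : ∑ p ∈ sj, ∫ ω, Zab p ω ∂μ ≤ 3 := by
      refine hm_le.trans ?_
      nlinarith
    have hmm := moment4 Zab sj hZmeas hZindep (fun p _ => habs p.1 p.2) hm3
    have h2 : (1256 : ℝ) * ∑ p ∈ sj, ∫ ω, Zab p ω ∂μ ≤ 1256 * ((n₁:ℝ) * (3 * q)) := by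
      linarith
    calc ∫ ω, (∑ i, |M ω i j|) ^ 4 ∂μ
        = ∫ ω, (∑ p ∈ sj, Zab p ω) ^ 4 ∂μ := by
          congr 1; funext ω; rw [hsum_eq]
      _ ≤ 1256 * ∑ p ∈ sj, ∫ ω, Zab p ω ∂μ := hmm
      _ ≤ 1256 * ((n₁:ℝ) * (3 * q)) := h2
      _ = 3768 * n₁ * q := by ring
  -- the squared coordinates of Mᵀx
  have hmv : ∀ (ω : Ω) (j : Fin n₂), (M ω)ᵀ.mulVec x j = ∑ i, M ω i j * x i := by
    intro ω j
    simp [Matrix.mulVec, dotProduct, Matrix.transpose_apply]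
  set Y : Fin n₂ → Ω → ℝ := fun j ω => (∑ i, M ω i j * x i) ^ 2 with hY
  have hK : ∀ i, |x i| ≤ ‖x‖ := by
    intro i
    rw [← Real.norm_eq_abs]
    exact norm_le_pi_norm x i
  have hK0 : (0:ℝ) ≤ ‖x‖ := norm_nonneg x
  have hSmeas : ∀ j, Measurable (fun ω => ∑ i, M ω i j * x i) :=
    fun j => Finset.measurable_sum _ fun i _ => (hM.meas i j).mul_const _
  have haeM : ∀ j, ∀ᵐ ω ∂μ, ∀ i, |M ω i j| ∈ Set.Icc (0:ℝ) 1 :=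
    fun j => ae_all_iff.2 fun i => habs i j
  have hSptw : ∀ (ω : Ω) (j : Fin n₂), |∑ i, M ω i j * x i| ≤ ‖x‖ * ∑ i, |M ω i j| := by
    intro ω j
    refine (Finset.abs_sum_le_sum_abs _ _).trans ?_
    rw [Finset.mul_sum]
    refine Finset.sum_le_sum fun i _ => ?_
    rw [abs_mul, mul_comm]
    exact mul_le_mul_of_nonneg_right (hK i) (abs_nonneg _)
  have hTbnd : ∀ j, ∀ᵐ ω ∂μ, ∑ i, |M ω i j| ≤ (n₁ : ℝ) := by
    intro j
    filter_upwards [haeM j] with ω hω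
    refine le_trans (Finset.sum_le_card_nsmul _ _ 1 fun i _ => (hω i).2) ?_
    simp
  have hTmeas : ∀ j, Measurable (fun ω => ∑ i, |M ω i j|) :=
    fun j => Finset.measurable_sum _ fun i _ => (hM.meas i j).abs
  have hT4int : ∀ j, Integrable (fun ω => (∑ i, |M ω i j|) ^ 4) μ := by
    intro j
    refine (memLp_top_of_bound ((hTmeas j).pow_const 4).aestronglyMeasurable
      ((n₁:ℝ) ^ 4) ?_).integrable le_top
    filter_upwards [hTbnd j, haeM j] with ω hω1 hω2
    rw [Real.norm_eq_abs, abs_pow]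
    have h0 : 0 ≤ ∑ i, |M ω i j| := Finset.sum_nonneg fun i _ => abs_nonneg _
    rw [abs_of_nonneg h0]
    exact pow_le_pow_left₀ h0 hω1 4
  have hS4int : ∀ j, Integrable (fun ω => (∑ i, M ω i j * x i) ^ 4) μ := by
    intro j
    refine (memLp_top_of_bound ((hSmeas j).pow_const 4).aestronglyMeasurable
      ((‖x‖ * n₁) ^ 4) ?_).integrable le_top
    filter_upwards [hTbnd j] with ω hω
    rw [Real.norm_eq_abs, abs_pow]
    refine pow_le_pow_left₀ (abs_nonneg _) ?_ 4
    refine (hSptw ω j).trans ?_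
    exact mul_le_mul_of_nonneg_left hω hK0
  have hS4 : ∀ j, ∫ ω, (∑ i, M ω i j * x i) ^ 4 ∂μ ≤ ‖x‖ ^ 4 * (3768 * n₁ * q) := by
    intro j
    have hstep : ∫ ω, (∑ i, M ω i j * x i) ^ 4 ∂μ ≤
        ∫ ω, ‖x‖ ^ 4 * (∑ i, |M ω i j|) ^ 4 ∂μ := by
      refine integral_mono_ae (hS4int j) ((hT4int j).const_mul _) ?_
      refine Filter.Eventually.of_forall fun ω => ?_
      show (∑ i, M ω i j * x i) ^ 4 ≤ ‖x‖ ^ 4 * (∑ i, |M ω i j|) ^ 4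
      have h1 : (∑ i, M ω i j * x i) ^ 4 = |∑ i, M ω i j * x i| ^ 4 := by
        rw [← abs_pow, abs_of_nonneg (by positivity)]
      rw [h1, ← mul_pow]
      exact pow_le_pow_left₀ (abs_nonneg _) (hSptw ω j) 4
    rw [integral_const_mul] at hstep
    refine hstep.trans ?_
    exact mul_le_mul_of_nonneg_left (hcol j) (by positivity)
  -- ℒ² membership of Y j
  have hYmeas : ∀ j, Measurable (Y j) := fun j => (hSmeas j).pow_const 2
  have hYmem : ∀ j, MemLp (Y j) 2 μ := by
    intro j
    refine (memLp_top_of_bound (hYmeas j).aestronglyMeasurable ((‖x‖ * n₁) ^ 2) ?_).mono_exponent le_top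
    filter_upwards [hTbnd j] with ω hω
    rw [hY]
    rw [Real.norm_eq_abs, abs_pow]
    refine pow_le_pow_left₀ (abs_nonneg _) ?_ 2
    refine (hSptw ω j).trans ?_
    exact mul_le_mul_of_nonneg_left hω hK0
  -- pairwise independence of the Y j
  have hpair : ∀ j j' : Fin n₂, j ≠ j' → IndepFun (Y j) (Y j') μ := by
    intro j j' hne
    have hdisj : Disjoint ((Finset.univ : Finset (Fin n₁)) ×ˢ ({j} : Finset (Fin n₂)))
        ((Finset.univ : Finset (Fin n₁)) ×ˢ ({j'} : Finset (Fin n₂))) := by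
      rw [Finset.disjoint_left]
      rintro ⟨a, b⟩ h1 h2
      simp only [Finset.mem_product, Finset.mem_singleton] at h1 h2
      exact hne (h1.2 ▸ h2.2 ▸ rfl)
    have base := hM.indep.indepFun_finset _ _ hdisj (fun p => hM.meas p.1 p.2)
    set g : ∀ jj : Fin n₂,
        (((Finset.univ : Finset (Fin n₁)) ×ˢ ({jj} : Finset (Fin n₂)) :
          Finset (Fin n₁ × Fin n₂)) → ℝ) → ℝ :=
      fun jj w => (∑ i, w ⟨(i, jj), by simp⟩ * x i) ^ 2 with hg
    have hgmeas : ∀ jj, Measurable (g jj) := by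
      intro jj
      rw [hg]
      refine Measurable.pow_const ?_ 2
      exact Finset.measurable_sum Finset.univ fun i _ => by fun_prop
    have comp := base.comp (hgmeas j) (hgmeas j')
    exact comp
  -- put everything together
  have hfun_eq : (fun ω => ∑ j, ((M ω)ᵀ.mulVec x j) ^ 2) = ∑ j ∈ Finset.univ, Y j := by
    funext ω
    rw [Finset.sum_apply]
    refine Finset.sum_congr rfl fun j _ => ?_
    rw [hmv]
  have hvar_eq : variance (fun ω => ∑ j, ((M ω)ᵀ.mulVec x j) ^ 2) μ
      = ∑ j, variance (Y j) μ := by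
    rw [hfun_eq]
    exact IndepFun.variance_sum (fun j _ => hYmem j)
      (fun j _ j' _ hne => hpair j j' hne)
  rw [hvar_eq]
  have hvar_le : ∀ j, variance (Y j) μ ≤ ‖x‖ ^ 4 * (3768 * n₁ * q) := by
    intro j
    refine le_trans (variance_le_expectation_sq (hYmeas j).aestronglyMeasurable) ?_
    have : (fun ω => (Y j ^ 2) ω) = fun ω => (∑ i, M ω i j * x i) ^ 4 := by
      funext ω
      simp only [Pi.pow_apply, hY]
      ring
    calc μ[Y j ^ 2] = ∫ ω, (∑ i, M ω i j * x i) ^ 4 ∂μ := by rw [← this]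
      _ ≤ ‖x‖ ^ 4 * (3768 * n₁ * q) := hS4 j
  calc ∑ j, variance (Y j) μ ≤ ∑ _j : Fin n₂, ‖x‖ ^ 4 * (3768 * n₁ * q) :=
        Finset.sum_le_sum fun j _ => hvar_le j
    _ = (n₂ : ℝ) * (‖x‖ ^ 4 * (3768 * n₁ * q)) := by
        rw [Finset.sum_const, Finset.card_univ, Fintype.card_fin, nsmul_eq_mul]
    _ = 3768 * n₂ * n₁ * q * ‖x‖ ^ 4 := by ring
end
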